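/- arXiv:1806.09193 — 7 statements merged into one kernel-verified Lean document; each statement's English description precedes it below -/
import Mathlib

section
/- For all j ≥ 0, the central binomial coefficient expression (2j+2)!/((j+1)!·(j+2)!) is bounded above by 4^{j+1} / ((j+2)·√(π(j+1))). -/
open Real Nat Stirling

lemma sqrt_pi_le_stirlingSeq (n : ℕ) : Real.sqrt Real.pi ≤ Stirling.stirlingSeq (n + 1) := by
  have hanti : Antitone (Stirling.stirlingSeq ∘ Nat.succ) := Stirling.stirlingSeq'_antitone
  have htend : Filter.Tendsto (Stirling.stirlingSeq ∘ Nat.succ) Filter.atTop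
      (nhds (Real.sqrt Real.pi)) :=
    (Stirling.tendsto_stirlingSeq_sqrt_pi).comp (Filter.tendsto_add_atTop_nat 1)
  exact hanti.le_of_tendsto htend n

lemma fact_eq (n : ℕ) (hn : 1 ≤ n) :
    (Nat.factorial n : ℝ) =
      Stirling.stirlingSeq n * (Real.sqrt (2 * n) * ((n : ℝ) / Real.exp 1) ^ n) := by
  rw [Stirling.stirlingSeq, div_mul_cancel₀]
  positivity

theorem stmt_1 :
    ∀ j : ℕ,
      (Nat.factorial (2 * j + 2) : ℝ) /
          (Nat.factorial (j + 1) * Nat.factorial (j + 2)) ≤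
        4 ^ (j + 1) / (((j : ℝ) + 2) * Real.sqrt (Real.pi * ((j : ℝ) + 1))) := by
  intro j
  set n : ℕ := j + 1 with hn
  have h2n : 2 * j + 2 = 2 * n := by omega
  -- key: √π * stirlingSeq (2n) ≤ stirlingSeq n ^ 2
  have hsp : Real.sqrt Real.pi ≤ Stirling.stirlingSeq n := sqrt_pi_le_stirlingSeq j
  have hsp2 : Real.sqrt Real.pi ≤ Stirling.stirlingSeq (2 * n) := by
    have : 2 * n = (2 * j + 1) + 1 := by omega
    rw [this]; exact sqrt_pi_le_stirlingSeq (2 * j + 1)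
  have hanti : Stirling.stirlingSeq (2 * n) ≤ Stirling.stirlingSeq n := by
    have : n = j + 1 := hn
    have h2 : 2 * n = (2 * j + 1) + 1 := by omega
    rw [this, h2]
    exact Stirling.stirlingSeq'_antitone (by omega : j ≤ 2 * j + 1)
  have hpi0 : (0:ℝ) < Real.sqrt Real.pi := Real.sqrt_pos.mpr Real.pi_pos
  have hkey : Real.sqrt Real.pi * Stirling.stirlingSeq (2 * n) ≤
      Stirling.stirlingSeq n ^ 2 := by
    nlinarith [hpi0.le, hsp, hsp2, hanti]
  -- main inequality: √(π n) * (2n)! ≤ 4^n * (n!)^2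
  have hnc : (1:ℝ) ≤ (n : ℝ) := by exact_mod_cast Nat.one_le_iff_ne_zero.mpr (by omega)
  have hnpos : (0:ℝ) < (n:ℝ) := by linarith
  have hf1 := fact_eq n (by omega)
  have hf2 := fact_eq (2 * n) (by omega)
  have hsn : Real.sqrt (2 * (2 * n : ℕ)) = 2 * Real.sqrt n := by
    have h : (2:ℝ) * ((2 * n : ℕ) : ℝ) = 2 ^ 2 * (n:ℝ) := by push_cast; ring
    rw [h, Real.sqrt_mul (by positivity), Real.sqrt_sq (by norm_num)]
  have hsq2n : Real.sqrt (2 * (n:ℕ)) ^ 2 = 2 * n := by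
    rw [Real.sq_sqrt (by positivity)]
  have hpow : (((2 * n : ℕ) : ℝ) / Real.exp 1) ^ (2 * n) =
      4 ^ n * (((n:ℝ) / Real.exp 1) ^ n) ^ 2 := by
    have hnum : ((2*n:ℕ):ℝ)^(2*n) = 4^n * ((n:ℝ)^n)^2 := by
      push_cast
      rw [mul_pow, pow_mul,
        show ((n:ℝ))^(2*n) = (((n:ℝ))^n)^2 by rw [mul_comm 2 n, pow_mul]]
      norm_num
    rw [div_pow, div_pow, hnum, div_pow, ← pow_mul, mul_comm n 2]
    ring
  have hsqp : Real.sqrt (Real.pi * (n:ℝ)) = Real.sqrt Real.pi * Real.sqrt n := by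
    rw [Real.sqrt_mul Real.pi_pos.le]
  have hsn2 : Real.sqrt (n:ℝ) ^ 2 = n := Real.sq_sqrt hnpos.le
  have hc : (0:ℝ) < ((n:ℝ) / Real.exp 1) ^ n := by positivity
  have hmain : Real.sqrt (Real.pi * (n:ℝ)) * (Nat.factorial (2 * n) : ℝ) ≤
      4 ^ n * ((Nat.factorial n : ℝ))^2 := by
    rw [hf1, hf2, hsn, hpow, hsqp]
    have expand : Real.sqrt Real.pi * Real.sqrt n *
        (Stirling.stirlingSeq (2*n) * (2 * Real.sqrt n * (4^n * (((n:ℝ)/Real.exp 1)^n)^2)))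
        = (Real.sqrt Real.pi * Stirling.stirlingSeq (2*n)) *
          (2 * (Real.sqrt n)^2 * 4^n * (((n:ℝ)/Real.exp 1)^n)^2) := by ring
    have expand2 : (4:ℝ)^n * (Stirling.stirlingSeq n *
        (Real.sqrt (2 * (n:ℕ)) * ((n:ℝ)/Real.exp 1)^n))^2
        = (Stirling.stirlingSeq n)^2 *
          (Real.sqrt (2 * (n:ℕ)))^2 * 4^n * (((n:ℝ)/Real.exp 1)^n)^2 := by ring
    rw [expand, expand2, hsq2n, hsn2]
    have hfac : (0:ℝ) ≤ 2 * (n:ℝ) * 4^n * (((n:ℝ)/Real.exp 1)^n)^2 := by positivity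
    nlinarith [mul_le_mul_of_nonneg_right hkey hfac]
  -- finish: divide
  have hj2 : (0:ℝ) < (j:ℝ) + 2 := by positivity
  have hsppos : (0:ℝ) < Real.sqrt (Real.pi * ((j:ℝ) + 1)) := by
    apply Real.sqrt_pos.mpr; positivity
  rw [div_le_div_iff₀ (by positivity) (by positivity)]
  have hfact2 : (Nat.factorial (j+2) : ℝ) = ((j:ℝ)+2) * Nat.factorial (j+1) := by
    rw [show j + 2 = (j+1) + 1 by ring, Nat.factorial_succ]; push_cast; ring
  have hcast : ((n:ℝ)) = (j:ℝ) + 1 := by push_cast [hn]; ring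
  rw [h2n, hfact2]
  have : Real.sqrt (Real.pi * ((j:ℝ)+1)) * (Nat.factorial (2*n) : ℝ) ≤
      4 ^ n * ((Nat.factorial (j+1) : ℝ))^2 := by
    rw [← hcast]; exact hmain
  calc (Nat.factorial (2*n) : ℝ) * (((j:ℝ)+2) * Real.sqrt (Real.pi * ((j:ℝ)+1)))
      = ((j:ℝ)+2) * (Real.sqrt (Real.pi * ((j:ℝ)+1)) * (Nat.factorial (2*n) : ℝ)) := by ring
    _ ≤ ((j:ℝ)+2) * (4 ^ n * ((Nat.factorial (j+1) : ℝ))^2) := by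
        exact mul_le_mul_of_nonneg_left this hj2.le
    _ = 4 ^ (j+1) * ((Nat.factorial (j+1) : ℝ) * (((j:ℝ)+2) * Nat.factorial (j+1))) := by
        rw [hn]; ring
end

section
/- For every integer n ≥ 1 and every k ∈ {0,1,2}, the series ∑_{p=1, p≠n}^{∞} p^{4-2k}/(p^4 - n^4)^2 converges and its square root is at most n^{1-k}/(2n^2 - 2n + 1). -/
set_option maxHeartbeats 1600000
open Finset


private lemma sum_le_telescope (f g : ℕ → ℝ) (m : ℕ) (h : ∀ i, i < m → f i ≤ g i - g (i+1)) :
    ∑ i ∈ range m, f i ≤ g 0 - g m := by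
  calc ∑ i ∈ range m, f i ≤ ∑ i ∈ range m, (g i - g (i+1)) := by
        apply Finset.sum_le_sum; intro i hi; exact h i (Finset.mem_range.mp hi)
    _ = g 0 - g m := Finset.sum_range_sub' g m

/-- tail bound : ∑_{i<m} 1/(i+6)^2 ≤ 2/11 -/
private lemma tail6 (m : ℕ) : ∑ i ∈ range m, (1:ℝ)/((i:ℝ)+6)^2 ≤ 2/11 := by
  have h := sum_le_telescope (fun i => (1:ℝ)/((i:ℝ)+6)^2) (fun i => 1/((i:ℝ)+11/2)) m ?_
  · have h0 : (0:ℝ) ≤ 1/((m:ℝ)+11/2) := by positivity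
    have h1 : (1:ℝ)/(0+11/2) = 2/11 := by norm_num
    calc ∑ i ∈ range m, (1:ℝ)/((i:ℝ)+6)^2 ≤ 1/(0+11/2) - 1/((m:ℝ)+11/2) := by simpa using h
      _ ≤ 2/11 := by rw [h1]; linarith
  · intro i _
    have h1 : (0:ℝ) < (i:ℝ)+11/2 := by positivity
    have h2 : (0:ℝ) < (i:ℝ)+1+11/2 := by positivity
    push_cast
    rw [div_sub_div _ _ (ne_of_gt h1) (ne_of_gt h2), div_le_div_iff₀ (by positivity) (by positivity)]
    nlinarith [sq_nonneg ((i:ℝ))]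

/-- K2 bound: ∑_{i<m} 1/(i+1)^2 ≤ 65159/39600 -/
private lemma sq_sum_le (m : ℕ) : ∑ i ∈ range m, (1:ℝ)/((i:ℝ)+1)^2 ≤ 65159/39600 := by
  rcases le_or_gt m 5 with h | h
  · calc ∑ i ∈ range m, (1:ℝ)/((i:ℝ)+1)^2 ≤ ∑ i ∈ range 5, (1:ℝ)/((i:ℝ)+1)^2 := by
          apply Finset.sum_le_sum_of_subset_of_nonneg
          · exact Finset.range_subset_range.mpr h
          · intros; positivity
      _ ≤ 65159/39600 := by norm_num [Finset.sum_range_succ]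
  · obtain ⟨t, rfl⟩ : ∃ t, m = 5 + t := ⟨m - 5, by omega⟩
    rw [Finset.sum_range_add]
    have h1 : ∑ i ∈ range 5, (1:ℝ)/((i:ℝ)+1)^2 = 5269/3600 := by
      norm_num [Finset.sum_range_succ]
    have h2 : ∑ i ∈ range t, (1:ℝ)/(((5+i : ℕ):ℝ)+1)^2 ≤ 2/11 := by
      have : ∀ i ∈ range t, (1:ℝ)/(((5+i : ℕ):ℝ)+1)^2 = 1/((i:ℝ)+6)^2 := by
        intro i _; push_cast; ring_nf
      rw [Finset.sum_congr rfl this]; exact tail6 t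
    rw [h1]; push_cast at h2 ⊢; linarith

/-- ∑_{i<m} 1/(i+2)^2 ≤ 25559/39600 -/
private lemma sq_sum_le2 (m : ℕ) : ∑ i ∈ range m, (1:ℝ)/((i:ℝ)+2)^2 ≤ 25559/39600 := by
  rcases le_or_gt m 4 with h | h
  · calc ∑ i ∈ range m, (1:ℝ)/((i:ℝ)+2)^2 ≤ ∑ i ∈ range 4, (1:ℝ)/((i:ℝ)+2)^2 := by
          apply Finset.sum_le_sum_of_subset_of_nonneg
          · exact Finset.range_subset_range.mpr h
          · intros; positivity
      _ ≤ 25559/39600 := by norm_num [Finset.sum_range_succ]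
  · obtain ⟨t, rfl⟩ : ∃ t, m = 4 + t := ⟨m - 4, by omega⟩
    rw [Finset.sum_range_add]
    have h1 : ∑ i ∈ range 4, (1:ℝ)/((i:ℝ)+2)^2 = 1669/3600 := by
      norm_num [Finset.sum_range_succ]
    have h2 : ∑ i ∈ range t, (1:ℝ)/(((4+i : ℕ):ℝ)+2)^2 ≤ 2/11 := by
      have : ∀ i ∈ range t, (1:ℝ)/(((4+i : ℕ):ℝ)+2)^2 = 1/((i:ℝ)+6)^2 := by
        intro i _; push_cast; ring_nf
      rw [Finset.sum_congr rfl this]; exact tail6 t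
    rw [h1]; push_cast at h2 ⊢; linarith

/-- ∑_{i<m} 1/(a+1+i)^2 ≤ 1/a - 1/(a+m), for real a ≥ 1 -/
private lemma shift_sq_sum (a : ℝ) (ha : 1 ≤ a) (m : ℕ) :
    ∑ i ∈ range m, 1/(a+1+(i:ℝ))^2 ≤ 1/a - 1/(a+m) := by
  have h := sum_le_telescope (fun i => 1/(a+1+(i:ℝ))^2) (fun i => 1/(a+(i:ℝ))) m ?_
  · simpa using h
  · intro i _
    have h1 : (0:ℝ) < a+(i:ℝ) := by push_cast; linarith [Nat.cast_nonneg (α := ℝ) i]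
    have h2 : (0:ℝ) < a+((i:ℝ)+1) := by linarith
    push_cast
    rw [div_sub_div _ _ (ne_of_gt h1) (ne_of_gt h2), div_le_div_iff₀ (by positivity) (by positivity)]
    nlinarith [sq_nonneg (a+(i:ℝ))]

/-- ∑_{i<m} 1/(a+1+i)^3 ≤ 1/(2a^2) - 1/(2(a+m)^2), for real a ≥ 1 -/
private lemma shift_cube_sum (a : ℝ) (ha : 1 ≤ a) (m : ℕ) :
    ∑ i ∈ range m, 1/(a+1+(i:ℝ))^3 ≤ 1/(2*a^2) - 1/(2*(a+m)^2) := by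
  have h := sum_le_telescope (fun i => 1/(a+1+(i:ℝ))^3) (fun i => 1/(2*(a+(i:ℝ))^2)) m ?_
  · simpa using h
  · intro i _
    have h1 : (0:ℝ) < a+(i:ℝ) := by linarith [Nat.cast_nonneg (α := ℝ) i]
    have h2 : (0:ℝ) < a+((i:ℝ)+1) := by linarith
    push_cast
    rw [div_sub_div _ _ (by positivity) (by positivity), div_le_div_iff₀ (by positivity) (by positivity)]
    nlinarith [sq_nonneg (a+(i:ℝ)), h1.le, sq_nonneg ((a+(i:ℝ))*(a+(i:ℝ)+1))]

/-- ∑_{i<m} 1/(a+1+i) ≤ log(a+m) - log a, for real a ≥ 1 -/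
private lemma harmonic_shift (a : ℝ) (ha : 1 ≤ a) (m : ℕ) :
    ∑ i ∈ range m, 1/(a+1+(i:ℝ)) ≤ Real.log (a+m) - Real.log a := by
  have h := sum_le_telescope (fun i => 1/(a+1+(i:ℝ))) (fun i => - Real.log (a+(i:ℝ))) m ?_
  · have h0 : ∑ i ∈ range m, 1/(a+1+(i:ℝ)) ≤ - Real.log (a+(0:ℕ)) - - Real.log (a+m) := by
      simpa using h
    have e : a+((0:ℕ):ℝ) = a := by push_cast; ring
    rw [e] at h0; linarith
  · intro i _
    have h1 : (0:ℝ) < a+(i:ℝ) := by linarith [Nat.cast_nonneg (α := ℝ) i]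
    have h2 : (0:ℝ) < a+((i:ℝ)+1) := by linarith
    have key : Real.log (a+(i:ℝ)) - Real.log (a+((i:ℝ)+1)) ≤ -(1/(a+((i:ℝ)+1))) := by
      have hq : Real.log ((a+(i:ℝ))/(a+((i:ℝ)+1))) ≤ (a+(i:ℝ))/(a+((i:ℝ)+1)) - 1 :=
        Real.log_le_sub_one_of_pos (by positivity)
      rw [Real.log_div (ne_of_gt h1) (ne_of_gt h2)] at hq
      have : (a+(i:ℝ))/(a+((i:ℝ)+1)) - 1 = -(1/(a+((i:ℝ)+1))) := by
        field_simp
        ring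
      linarith [hq, this.le, this.ge]
    have e : a+1+(i:ℝ) = a+((i:ℝ)+1) := by ring
    push_cast
    rw [e]
    linarith

/-- ∑_{i<m} 1/(i+1) ≤ 1 + log m for m ≥ 1 -/
private lemma harmonic_le (m : ℕ) (hm : 1 ≤ m) :
    ∑ i ∈ range m, (1:ℝ)/((i:ℝ)+1) ≤ 1 + Real.log m := by
  obtain ⟨t, rfl⟩ : ∃ t, m = 1 + t := ⟨m - 1, by omega⟩
  rw [Finset.sum_range_add]
  have h1 : ∑ i ∈ range 1, (1:ℝ)/((i:ℝ)+1) = 1 := by norm_num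
  have h2 : ∑ i ∈ range t, (1:ℝ)/(((1+i : ℕ):ℝ)+1) ≤ Real.log (1+(t:ℝ)) - Real.log 1 := by
    have he : ∀ i ∈ range t, (1:ℝ)/(((1+i : ℕ):ℝ)+1) = 1/((1:ℝ)+1+(i:ℝ)) := by
      intro i _; push_cast; ring_nf
    rw [Finset.sum_congr rfl he]; exact harmonic_shift 1 le_rfl t
  rw [h1]
  simp only [Real.log_one, sub_zero] at h2
  push_cast at h2 ⊢
  linarith

private lemma tel1 (m : ℕ) : ∑ i ∈ range m, (1:ℝ)/(((i:ℝ)+1)*((i:ℝ)+2)) ≤ 1 := by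
  have h := sum_le_telescope (fun i => (1:ℝ)/(((i:ℝ)+1)*((i:ℝ)+2))) (fun i => 1/((i:ℝ)+1)) m ?_
  · have h2 : (0:ℝ) ≤ 1/((m:ℝ)+1) := by positivity
    have h3 : (1:ℝ)/(((0:ℕ):ℝ)+1) = 1 := by norm_num
    calc ∑ i ∈ range m, (1:ℝ)/(((i:ℝ)+1)*((i:ℝ)+2)) ≤ 1/(((0:ℕ):ℝ)+1) - 1/((m:ℝ)+1) := h
      _ ≤ 1 := by rw [h3]; linarith
  · intro i _
    have h1 : (0:ℝ) < (i:ℝ)+1 := by positivity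
    have h2 : (0:ℝ) < (i:ℝ)+2 := by positivity
    push_cast
    rw [div_sub_div _ _ (ne_of_gt h1) (by linarith), div_le_div_iff₀ (by positivity) (by positivity)]
    ring_nf
    nlinarith [sq_nonneg ((i:ℝ))]

private lemma left_tel (m : ℕ) :
    ∑ i ∈ range m, (1:ℝ)/((((m-i:ℕ)):ℝ)*((((m-i:ℕ)):ℝ)+1)) ≤ 1 := by
  have h := sum_le_telescope (fun i => (1:ℝ)/((((m-i:ℕ)):ℝ)*((((m-i:ℕ)):ℝ)+1)))
      (fun i => -(1/((((m-i:ℕ)):ℝ)+1))) m ?_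
  · have e0 : ((m-0:ℕ):ℝ) = (m:ℝ) := by norm_num
    have em : ((m-m:ℕ):ℝ) = 0 := by simp
    simp only [e0, em] at h
    have h2 : (0:ℝ) ≤ 1/((m:ℝ)+1) := by positivity
    calc ∑ i ∈ range m, (1:ℝ)/((((m-i:ℕ)):ℝ)*((((m-i:ℕ)):ℝ)+1))
        ≤ -(1/((m:ℝ)+1)) - -(1/((0:ℝ)+1)) := h
      _ ≤ 1 := by
          have : (0:ℝ) ≤ (m:ℝ)+1 := by positivity
          rw [zero_add]
          nlinarith [h2]
  · intro i hi
    have hlt : i < m := hi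
    have hc : ((m-(i+1):ℕ):ℝ)+1 = ((m-i:ℕ):ℝ) := by
      have : (m-(i+1)) + 1 = m - i := by omega
      exact_mod_cast congrArg (Nat.cast : ℕ → ℝ) this
    have ht : (1:ℝ) ≤ ((m-i:ℕ):ℝ) := by
      have : 1 ≤ m - i := by omega
      exact_mod_cast this
    rw [hc]
    set t := ((m-i:ℕ):ℝ)
    have h0 : (0:ℝ) < t := by linarith
    field_simp
    ring_nf
    nlinarith [sq_nonneg t]

/-- generic assembly for the k=0/k=1 cases -/
private lemma assemble (F : ℕ → ℝ) (n : ℕ) (hn : 1 ≤ n) (B2 : ℝ) (hB2 : 0 ≤ B2)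
    (hF0 : ∀ p, 0 ≤ F p) (h0 : F 0 = 0) (hnn : F n = 0)
    (hL : ∀ i, i < n-1 → F (i+1) ≤
      (B2/2) * (1/((((n-1-i:ℕ)):ℝ)*((((n-1-i:ℕ)):ℝ)+1))))
    (hR : ∀ i : ℕ, F (n+1+i) ≤ (B2/2) * (1/(((i:ℝ)+1)*((i:ℝ)+2)))) :
    ∀ N, ∑ p ∈ range N, F p ≤ B2 := by
  have hLsum : ∑ p ∈ range (n+1), F p ≤ B2/2 := by
    obtain ⟨m, rfl⟩ : ∃ m, n = m + 1 := ⟨n - 1, by omega⟩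
    rw [Finset.sum_range_succ' F (m+1), h0, add_zero, Finset.sum_range_succ, hnn, add_zero]
    have e : m + 1 - 1 = m := by omega
    calc ∑ i ∈ range m, F (i+1)
        ≤ ∑ i ∈ range m, (B2/2) * (1/((((m-i:ℕ)):ℝ)*((((m-i:ℕ)):ℝ)+1))) := by
          apply Finset.sum_le_sum
          intro i hi
          have := hL i (by simpa [e] using (Finset.mem_range.mp hi))
          rwa [e] at this
      _ = (B2/2) * ∑ i ∈ range m, (1/((((m-i:ℕ)):ℝ)*((((m-i:ℕ)):ℝ)+1))) := by
          rw [Finset.mul_sum]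
      _ ≤ (B2/2) * 1 := by
          apply mul_le_mul_of_nonneg_left (left_tel m) (by positivity)
      _ = B2/2 := by ring
  have hRsum : ∀ R, ∑ i ∈ range R, F (n+1+i) ≤ B2/2 := by
    intro R
    calc ∑ i ∈ range R, F (n+1+i)
        ≤ ∑ i ∈ range R, (B2/2) * (1/(((i:ℝ)+1)*((i:ℝ)+2))) := Finset.sum_le_sum (fun i _ => hR i)
      _ = (B2/2) * ∑ i ∈ range R, (1/(((i:ℝ)+1)*((i:ℝ)+2))) := by rw [Finset.mul_sum]
      _ ≤ (B2/2) * 1 := mul_le_mul_of_nonneg_left (tel1 R) (by positivity)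
      _ = B2/2 := by ring
  intro N
  have hsub : ∑ p ∈ range N, F p ≤ ∑ p ∈ range (max N (n+1)), F p :=
    Finset.sum_le_sum_of_subset_of_nonneg
      (Finset.range_subset_range.mpr (le_max_left _ _)) (fun i _ _ => hF0 i)
  obtain ⟨R, hR'⟩ : ∃ R, max N (n+1) = (n+1) + R := ⟨max N (n+1) - (n+1), by omega⟩
  rw [hR', Finset.sum_range_add] at hsub
  have := hRsum R
  calc ∑ p ∈ range N, F p ≤ ∑ p ∈ range (n+1), F p + ∑ i ∈ range R, F (n+1+i) := hsub
    _ ≤ B2/2 + B2/2 := add_le_add hLsum (hRsum R)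
    _ = B2 := by ring


section KeyPoly

private lemma A0 (x y : ℝ) (hx : 1 ≤ x) (hy : 1 ≤ y) :
    5*y^2*(2*x^2-2*x+1) ≤ 3*x*(x+y)*(x^2+y^2) := by
  have hx0 : (0:ℝ) ≤ x := by linarith
  have hy0 : (0:ℝ) ≤ y := by linarith
  rcases le_or_gt (3*y) (7*x) with h | h
  · nlinarith [mul_nonneg (mul_nonneg hx0 hy0) (sq_nonneg (7*x-6*y)),
      mul_nonneg (mul_nonneg (mul_nonneg hx0 hx0) hx0) (by linarith : (0:ℝ) ≤ 7*x-3*y),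
      pow_nonneg hx0 4, mul_nonneg (mul_nonneg hy0 hy0) (by linarith : (0:ℝ) ≤ 2*x-1)]
  · nlinarith [mul_nonneg (mul_nonneg hx0 hy0) (mul_nonneg hy0 (by linarith : (0:ℝ) ≤ 3*y-7*x)),
      pow_nonneg hx0 4, mul_nonneg (mul_nonneg (mul_nonneg hx0 hx0) hx0) hy0,
      mul_nonneg (mul_nonneg hy0 hy0) (by linarith : (0:ℝ) ≤ 2*x-1)]

private lemma A1 (x y : ℝ) (hx : 1 ≤ x) (hy : 1 ≤ y) :
    5*y*(2*x^2-2*x+1) ≤ 3*(x+y)*(x^2+y^2) := by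
  have hx0 : (0:ℝ) ≤ x := by linarith
  have hy0 : (0:ℝ) ≤ y := by linarith
  rcases le_or_gt (36*y) (13*x) with h | h
  · nlinarith [mul_nonneg (mul_nonneg (mul_nonneg hx0 hx0) hx0) (by linarith : (0:ℝ) ≤ 13*x-36*y),
      mul_nonneg hy0 (by linarith : (0:ℝ) ≤ 2*x-1), mul_nonneg hx0 (mul_nonneg hy0 hy0),
      mul_nonneg (mul_nonneg hy0 hy0) hy0]
  · nlinarith [mul_nonneg hx0 (sq_nonneg (6*x-7*y)),
      mul_nonneg (mul_nonneg hy0 hy0) (by linarith : (0:ℝ) ≤ 36*y-13*x),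
      mul_nonneg hy0 (by linarith : (0:ℝ) ≤ 2*x-1),
      mul_nonneg hx0 (mul_nonneg hy0 hy0)]

end KeyPoly

section TermCore

private lemma core1L (x y J : ℝ) (hy1 : 1 ≤ y) (hJ1 : 1 ≤ J) (hxy : x = y + J)
    (hcase : J = 1 ∨ J = 2 ∨ 3 ≤ J) :
    y^2/((y^4-x^4)^2) ≤ (1/(2*x^2-2*x+1)^2) * (1/(2*J*(J+1))) := by
  have hx2 : 2 ≤ x := by rw [hxy]; linarith
  have hq1 : 1 ≤ 2*x^2-2*x+1 := by nlinarith
  have hD : (y^4-x^4)^2 = (J*((x+y)*(x^2+y^2)))^2 := by rw [hxy]; ring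
  have hDpos : (0:ℝ) < (J*((x+y)*(x^2+y^2)))^2 := by positivity
  have hpos : (0:ℝ) < (2*x^2-2*x+1)^2*(2*J*(J+1)) := by positivity
  have target : y^2 * ((2*x^2-2*x+1)^2*(2*J*(J+1))) ≤ (J*((x+y)*(x^2+y^2)))^2 := by
    rcases hcase with hJe | hJe | hJ3
    · have hyx : y = x - 1 := by rw [hxy, hJe]; ring
      have h4 : 4*y^2 ≤ (2*x-1)^2 := by nlinarith
      have e2 : (x+y)*(x^2+y^2) = (2*x-1)*(2*x^2-2*x+1) := by rw [hyx]; ring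
      calc y^2 * ((2*x^2-2*x+1)^2*(2*J*(J+1))) = (4*y^2)*(2*x^2-2*x+1)^2 := by rw [hJe]; ring
        _ ≤ (2*x-1)^2*(2*x^2-2*x+1)^2 := mul_le_mul_of_nonneg_right h4 (by positivity)
        _ = (J*((x+y)*(x^2+y^2)))^2 := by rw [e2, hJe]; ring
    · have hyx : y = x - 2 := by rw [hxy, hJe]; ring
      have hx3 : 3 ≤ x := by linarith
      have key : 7*(x-2)*(2*x^2-2*x+1) ≤ 16*(x-1)*(x^2-2*x+2) := by
        nlinarith [sq_nonneg x, sq_nonneg (x-3)]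
      have key2 : (7*(x-2)*(2*x^2-2*x+1))^2 ≤ (16*(x-1)*(x^2-2*x+2))^2 := by
        apply pow_le_pow_left₀ (by nlinarith) key
      have e2 : (x+y)*(x^2+y^2) = 4*(x-1)*(x^2-2*x+2) := by rw [hyx]; ring
      calc y^2 * ((2*x^2-2*x+1)^2*(2*J*(J+1)))
          = (12/49)*((7*(x-2)*(2*x^2-2*x+1))^2) := by rw [hJe, hyx]; ring
        _ ≤ (12/49)*((16*(x-1)*(x^2-2*x+2))^2) := mul_le_mul_of_nonneg_left key2 (by norm_num)
        _ ≤ (1/4)*((16*(x-1)*(x^2-2*x+2))^2) :=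
            mul_le_mul_of_nonneg_right (by norm_num) (by positivity)
        _ = (J*((x+y)*(x^2+y^2)))^2 := by rw [e2, hJe]; ring
    · have key : 5*y*(2*x^2-2*x+1) ≤ 3*((x+y)*(x^2+y^2)) := by
        have := A1 x y (by linarith) hy1
        linarith
      have key2 : (5*y*(2*x^2-2*x+1))^2 ≤ (3*((x+y)*(x^2+y^2)))^2 := by
        apply pow_le_pow_left₀ (by positivity) key
      calc y^2 * ((2*x^2-2*x+1)^2*(2*J*(J+1))) = (2*J*(J+1)) * (y^2*(2*x^2-2*x+1)^2) := by ring
        _ ≤ ((25/9)*J^2) * (y^2*(2*x^2-2*x+1)^2) := by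
            apply mul_le_mul_of_nonneg_right _ (by positivity)
            nlinarith
        _ = (J^2/9) * ((5*y*(2*x^2-2*x+1))^2) := by ring
        _ ≤ (J^2/9) * ((3*((x+y)*(x^2+y^2)))^2) := mul_le_mul_of_nonneg_left key2 (by positivity)
        _ = (J*((x+y)*(x^2+y^2)))^2 := by ring
  have e : 1/(2*x^2-2*x+1)^2 * (1/(2*J*(J+1))) = 1/((2*x^2-2*x+1)^2*(2*J*(J+1))) := by
    rw [div_mul_div_comm, one_mul]
  rw [hD, e, div_le_div_iff₀ hDpos hpos, one_mul]
  exact target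

private lemma core0R (x y J : ℝ) (hx1 : 1 ≤ x) (hJ1 : 1 ≤ J) (hxy : y = x + J)
    (hcase : J = 1 ∨ J = 2 ∨ 3 ≤ J) :
    y^4/((y^4-x^4)^2) ≤ (x^2/(2*x^2-2*x+1)^2) * (1/(2*J*(J+1))) := by
  have hy2 : 2 ≤ y := by rw [hxy]; linarith
  have hq1 : 1 ≤ 2*x^2-2*x+1 := by nlinarith [sq_nonneg (x-1)]
  have hD : (y^4-x^4)^2 = (J*((x+y)*(x^2+y^2)))^2 := by rw [hxy]; ring
  have hDpos : (0:ℝ) < (J*((x+y)*(x^2+y^2)))^2 := by positivity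
  have hpos : (0:ℝ) < (2*x^2-2*x+1)^2*(2*J*(J+1)) := by positivity
  have target : y^4 * ((2*x^2-2*x+1)^2*(2*J*(J+1))) ≤ x^2*(J*((x+y)*(x^2+y^2)))^2 := by
    rcases hcase with hJe | hJe | hJ3
    · have hyx : y = x + 1 := by rw [hxy, hJe]
      have key : 2*(x+1)^2*(2*x^2-2*x+1) ≤ x*(2*x+1)*(2*x^2+2*x+1) := by
        nlinarith [sq_nonneg x, sq_nonneg (x-1)]
      have key2 : (2*(x+1)^2*(2*x^2-2*x+1))^2 ≤ (x*(2*x+1)*(2*x^2+2*x+1))^2 := by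
        apply pow_le_pow_left₀ (by positivity) key
      have e2 : (x+y)*(x^2+y^2) = (2*x+1)*(2*x^2+2*x+1) := by rw [hyx]; ring
      calc y^4 * ((2*x^2-2*x+1)^2*(2*J*(J+1))) = (2*(x+1)^2*(2*x^2-2*x+1))^2 := by
            rw [hJe, hyx]; ring
        _ ≤ (x*(2*x+1)*(2*x^2+2*x+1))^2 := key2
        _ = x^2*(J*((x+y)*(x^2+y^2)))^2 := by rw [e2, hJe]; ring
    · have hyx : y = x + 2 := by rw [hxy, hJe]
      have key : 7*(x+2)^2*(2*x^2-2*x+1) ≤ 16*x*(x+1)*(x^2+2*x+2) := by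
        nlinarith [sq_nonneg x, sq_nonneg (x-1), sq_nonneg (x-2)]
      have key2 : (7*(x+2)^2*(2*x^2-2*x+1))^2 ≤ (16*x*(x+1)*(x^2+2*x+2))^2 := by
        apply pow_le_pow_left₀ (by positivity) key
      have e2 : (x+y)*(x^2+y^2) = 4*(x+1)*(x^2+2*x+2) := by rw [hyx]; ring
      calc y^4 * ((2*x^2-2*x+1)^2*(2*J*(J+1)))
          = (12/49)*((7*(x+2)^2*(2*x^2-2*x+1))^2) := by rw [hJe, hyx]; ring
        _ ≤ (12/49)*((16*x*(x+1)*(x^2+2*x+2))^2) := mul_le_mul_of_nonneg_left key2 (by norm_num)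
        _ ≤ (1/4)*((16*x*(x+1)*(x^2+2*x+2))^2) :=
            mul_le_mul_of_nonneg_right (by norm_num) (by positivity)
        _ = x^2*(J*((x+y)*(x^2+y^2)))^2 := by rw [e2, hJe]; ring
    · have key : 5*y^2*(2*x^2-2*x+1) ≤ 3*(x*((x+y)*(x^2+y^2))) := by
        have := A0 x y hx1 (by linarith)
        linarith
      have key2 : (5*y^2*(2*x^2-2*x+1))^2 ≤ (3*(x*((x+y)*(x^2+y^2))))^2 := by
        apply pow_le_pow_left₀ (by positivity) key
      calc y^4 * ((2*x^2-2*x+1)^2*(2*J*(J+1))) = (2*J*(J+1)) * (y^4*(2*x^2-2*x+1)^2) := by ring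
        _ ≤ ((25/9)*J^2) * (y^4*(2*x^2-2*x+1)^2) := by
            apply mul_le_mul_of_nonneg_right _ (by positivity)
            nlinarith
        _ = (J^2/9) * ((5*y^2*(2*x^2-2*x+1))^2) := by ring
        _ ≤ (J^2/9) * ((3*(x*((x+y)*(x^2+y^2))))^2) := mul_le_mul_of_nonneg_left key2 (by positivity)
        _ = x^2*(J*((x+y)*(x^2+y^2)))^2 := by ring
  have e : x^2/(2*x^2-2*x+1)^2 * (1/(2*J*(J+1))) = x^2/((2*x^2-2*x+1)^2*(2*J*(J+1))) := by
    rw [div_mul_div_comm, mul_one]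
  rw [hD, e, div_le_div_iff₀ hDpos hpos]
  linarith [target]

/-- k=2 right termwise: y = x + J, any J ≥ 1 -/
private lemma core2R (x y J : ℝ) (hx1 : 1 ≤ x) (hJ1 : 1 ≤ J) (hxy : y = x + J) :
    1/((y^4-x^4)^2) ≤ (1/(x^2*(2*x^2-2*x+1)^2)) * (1/(4*J^2)) := by
  have hq1 : 1 ≤ 2*x^2-2*x+1 := by nlinarith [sq_nonneg (x-1)]
  have hy2 : 2 ≤ y := by rw [hxy]; linarith
  have hD : (y^4-x^4)^2 = (J*((x+y)*(x^2+y^2)))^2 := by rw [hxy]; ring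
  have hDpos : (0:ℝ) < (J*((x+y)*(x^2+y^2)))^2 := by
    have h1 : (0:ℝ) < J*((x+y)*(x^2+y^2)) := by
      apply mul_pos (by linarith)
      apply mul_pos (by linarith)
      nlinarith
    positivity
  have hpos : (0:ℝ) < x^2*(2*x^2-2*x+1)^2*(4*J^2) := by
    have hx0 : (0:ℝ) < x := by linarith
    have hJ0 : (0:ℝ) < J := by linarith
    positivity
  have key : 2*x*(2*x^2-2*x+1) ≤ (x+y)*(x^2+y^2) := by
    rw [hxy]; nlinarith [mul_nonneg (by linarith : (0:ℝ) ≤ J) (sq_nonneg x), sq_nonneg J,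
      mul_nonneg (by linarith : (0:ℝ) ≤ J) (by linarith : (0:ℝ) ≤ J)]
  have key2 : (2*x*(2*x^2-2*x+1))^2 ≤ ((x+y)*(x^2+y^2))^2 := by
    apply pow_le_pow_left₀ (by positivity) key
  have target : 1 * (x^2*(2*x^2-2*x+1)^2*(4*J^2)) ≤ (J*((x+y)*(x^2+y^2)))^2 := by
    calc 1 * (x^2*(2*x^2-2*x+1)^2*(4*J^2)) = J^2 * ((2*x*(2*x^2-2*x+1))^2) := by ring
      _ ≤ J^2 * (((x+y)*(x^2+y^2))^2) := mul_le_mul_of_nonneg_left key2 (by positivity)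
      _ = (J*((x+y)*(x^2+y^2)))^2 := by ring
  have e : 1/(x^2*(2*x^2-2*x+1)^2) * (1/(4*J^2)) = 1/(x^2*(2*x^2-2*x+1)^2*(4*J^2)) := by
    rw [div_mul_div_comm, one_mul]
  rw [hD, e, div_le_div_iff₀ hDpos hpos]
  linarith [target]

end TermCore


private lemma k2_point (N P : ℝ) (hP : 1 ≤ P) (hPN : P + 1 ≤ N) :
    N^2 / ((N-P)*(N+P)*(N^2+P^2))^2 ≤
      1/(16*N^4*(N-P)^2) + 13/(16*N^4*(N+P)^2)
      + 3/(16*N^5*(N-P)) + 3/(16*N^5*(N+P)) + 1/(2*N^3*(N+P)^3) := by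
  have hu : (0:ℝ) < N - P := by linarith
  have hN : (0:ℝ) < N := by linarith
  have hm : (0:ℝ) < N + P := by linarith
  have hs : (0:ℝ) < N^2 + P^2 := by positivity
  have hsN : N^2 ≤ N^2 + P^2 := by nlinarith
  have hsm : (N+P)^2 ≤ 2*(N^2+P^2) := by nlinarith [sq_nonneg (N-P)]
  have hu0 : N - P ≠ 0 := ne_of_gt hu
  have hm0 : N + P ≠ 0 := ne_of_gt hm
  have hs0 : N^2 + P^2 ≠ 0 := ne_of_gt hs
  have hN0 : N ≠ 0 := ne_of_gt hN
  have hid : 1/((N-P)*(N+P)*(N^2+P^2)) =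
      1/(4*N^3*(N-P)) + 1/(4*N^3*(N+P)) + 1/(2*N^2*(N^2+P^2)) := by
    field_simp
    ring
  have h1 : N^2 / ((N-P)*(N+P)*(N^2+P^2))^2
      = N^2*(1/(4*N^3*(N-P)) + 1/(4*N^3*(N+P)) + 1/(2*N^2*(N^2+P^2)))^2 := by
    rw [← hid]; field_simp
  -- term bounds
  have hT3 : N^2*(1/(2*N^2*(N^2+P^2)))^2 ≤ 1/(2*N^4*(N+P)^2) := by
    have e : N^2*(1/(2*N^2*(N^2+P^2)))^2 = 1/(4*N^2*(N^2+P^2)^2) := by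
      field_simp; ring
    rw [e]
    apply one_div_le_one_div_of_le (by positivity)
    calc 2*N^4*(N+P)^2 = 2*N^2*(N^2*(N+P)^2) := by ring
      _ ≤ 2*N^2*((N^2+P^2)*(2*(N^2+P^2))) := by
          apply mul_le_mul_of_nonneg_left _ (by positivity)
          exact mul_le_mul hsN hsm (by positivity) (le_of_lt hs)
      _ = 4*N^2*(N^2+P^2)^2 := by ring
  have hT4 : 2*N^2*((1/(4*N^3*(N-P)))*(1/(4*N^3*(N+P)))) = 1/(16*N^5*(N-P)) + 1/(16*N^5*(N+P)) := by
    field_simp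
    ring
  have hT5 : 2*N^2*((1/(4*N^3*(N-P)))*(1/(2*N^2*(N^2+P^2))))
      ≤ 1/(8*N^5*(N-P)) + 1/(8*N^5*(N+P)) + 1/(4*N^4*(N+P)^2) := by
    have e1 : 2*N^2*((1/(4*N^3*(N-P)))*(1/(2*N^2*(N^2+P^2)))) = 1/(4*N^3*((N-P)*(N^2+P^2))) := by
      field_simp
    have e2 : 1/(8*N^5*(N-P)) + 1/(8*N^5*(N+P)) + 1/(4*N^4*(N+P)^2)
        = 1/(2*N^3*((N-P)*(N+P)^2)) := by
      field_simp; ring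
    rw [e1, e2]
    apply one_div_le_one_div_of_le (by positivity)
    calc 2*N^3*((N-P)*(N+P)^2) ≤ 2*N^3*((N-P)*(2*(N^2+P^2))) := by
          apply mul_le_mul_of_nonneg_left _ (by positivity)
          exact mul_le_mul_of_nonneg_left hsm (le_of_lt hu)
      _ = 4*N^3*((N-P)*(N^2+P^2)) := by ring
  have hT6 : 2*N^2*((1/(4*N^3*(N+P)))*(1/(2*N^2*(N^2+P^2)))) ≤ 1/(2*N^3*(N+P)^3) := by
    have e1 : 2*N^2*((1/(4*N^3*(N+P)))*(1/(2*N^2*(N^2+P^2)))) = 1/(4*N^3*((N+P)*(N^2+P^2))) := by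
      field_simp
    have e2 : 1/(2*N^3*(N+P)^3) = 1/(2*N^3*((N+P)*(N+P)^2)) := by ring_nf
    rw [e1, e2]
    apply one_div_le_one_div_of_le (by positivity)
    calc 2*N^3*((N+P)*(N+P)^2) ≤ 2*N^3*((N+P)*(2*(N^2+P^2))) := by
          apply mul_le_mul_of_nonneg_left _ (by positivity)
          exact mul_le_mul_of_nonneg_left hsm (le_of_lt hm)
      _ = 4*N^3*((N+P)*(N^2+P^2)) := by ring
  have hT1 : N^2*(1/(4*N^3*(N-P)))^2 = 1/(16*N^4*(N-P)^2) := by field_simp; ring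
  have hT2 : N^2*(1/(4*N^3*(N+P)))^2 = 1/(16*N^4*(N+P)^2) := by field_simp; ring
  have h2 : N^2*(1/(4*N^3*(N-P)) + 1/(4*N^3*(N+P)) + 1/(2*N^2*(N^2+P^2)))^2
      = N^2*(1/(4*N^3*(N-P)))^2 + N^2*(1/(4*N^3*(N+P)))^2 + N^2*(1/(2*N^2*(N^2+P^2)))^2
      + 2*N^2*((1/(4*N^3*(N-P)))*(1/(4*N^3*(N+P))))
      + 2*N^2*((1/(4*N^3*(N-P)))*(1/(2*N^2*(N^2+P^2))))
      + 2*N^2*((1/(4*N^3*(N+P)))*(1/(2*N^2*(N^2+P^2)))) := by ring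
  have hsplit : (3:ℝ)/(16*N^5*(N-P)) = 1/(16*N^5*(N-P)) + 1/(8*N^5*(N-P)) := by
    field_simp; ring
  have hsplit2 : (3:ℝ)/(16*N^5*(N+P)) = 1/(16*N^5*(N+P)) + 1/(8*N^5*(N+P)) := by
    field_simp; ring
  have hsplit3 : (13:ℝ)/(16*N^4*(N+P)^2) = 1/(16*N^4*(N+P)^2) + 1/(2*N^4*(N+P)^2) + 1/(4*N^4*(N+P)^2) := by
    field_simp; ring
  rw [h1, h2, hsplit, hsplit2, hsplit3]
  linarith


private lemma fR1bound (x : ℝ) (hx : 32 ≤ x) :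
    x^2*(2*x^2-2*x+1)^2 / (((2*x+1)*(2*x^2+2*x+1))^2) ≤ 1/4 - 1/x := by
  have hx0 : (0:ℝ) < x := by linarith
  have h32 : (0:ℝ) ≤ x - 32 := by linarith
  have key : 4*x^3*(2*x^2-2*x+1)^2 ≤ (x-4)*((2*x+1)*(2*x^2+2*x+1))^2 := by
    nlinarith [pow_nonneg h32 2, pow_nonneg h32 3, pow_nonneg h32 4, pow_nonneg h32 5, pow_nonneg h32 6]
  rw [div_le_iff₀ (by positivity)]
  have e : (1/4 - 1/x) * ((2*x+1)*(2*x^2+2*x+1))^2 = ((x-4)*((2*x+1)*(2*x^2+2*x+1))^2)/(4*x) := by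
    field_simp
  rw [e, le_div_iff₀ (by positivity)]
  nlinarith [key, sq_nonneg x]



private lemma term1L (n p j : ℕ) (hp : 1 ≤ p) (hj : 1 ≤ j) (hn : n = p + j) :
    (p:ℝ)^2/(((p:ℝ)^4-(n:ℝ)^4)^2) ≤
      (1/(2*(n:ℝ)^2-2*(n:ℝ)+1)^2) * (1/(2*(j:ℝ)*((j:ℝ)+1))) := by
  apply core1L (n:ℝ) (p:ℝ) (j:ℝ) (by exact_mod_cast hp) (by exact_mod_cast hj)
    (by rw [hn]; push_cast; ring)
  rcases Nat.lt_or_ge j 3 with h3 | h3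
  · interval_cases j
    · left; norm_num
    · right; left; norm_num
  · right; right; exact_mod_cast h3

private lemma term0R (n p j : ℕ) (hn1 : 1 ≤ n) (hj : 1 ≤ j) (hp : p = n + j) :
    (p:ℝ)^4/(((p:ℝ)^4-(n:ℝ)^4)^2) ≤
      ((n:ℝ)^2/(2*(n:ℝ)^2-2*(n:ℝ)+1)^2) * (1/(2*(j:ℝ)*((j:ℝ)+1))) := by
  apply core0R (n:ℝ) (p:ℝ) (j:ℝ) (by exact_mod_cast hn1) (by exact_mod_cast hj)
    (by rw [hp]; push_cast; ring)
  rcases Nat.lt_or_ge j 3 with h3 | h3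
  · interval_cases j
    · left; norm_num
    · right; left; norm_num
  · right; right; exact_mod_cast h3

private lemma half_helper (X t : ℝ) : X * (1/(2*t*(t+1))) = X/2 * (1/(t*(t+1))) := by
  rw [one_div, one_div, mul_inv, mul_inv, mul_inv]
  ring

private lemma term0L (n p j : ℕ) (hp : 1 ≤ p) (hj : 1 ≤ j) (hn : n = p + j) :
    (p:ℝ)^4/(((p:ℝ)^4-(n:ℝ)^4)^2) ≤
      ((n:ℝ)^2/(2*(n:ℝ)^2-2*(n:ℝ)+1)^2) * (1/(2*(j:ℝ)*((j:ℝ)+1))) := by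
  have h1 := term1L n p j hp hj hn
  have hpn : (p:ℝ)^2 ≤ (n:ℝ)^2 := by
    have h2 : (p:ℝ) ≤ (n:ℝ) := by exact_mod_cast (by omega : p ≤ n)
    nlinarith [Nat.cast_nonneg (α := ℝ) p]
  have hD0 : (0:ℝ) ≤ (p:ℝ)^2/(((p:ℝ)^4-(n:ℝ)^4)^2) := by positivity
  calc (p:ℝ)^4/(((p:ℝ)^4-(n:ℝ)^4)^2) = (p:ℝ)^2 * ((p:ℝ)^2/(((p:ℝ)^4-(n:ℝ)^4)^2)) := by ring
    _ ≤ (n:ℝ)^2 * ((p:ℝ)^2/(((p:ℝ)^4-(n:ℝ)^4)^2)) := mul_le_mul_of_nonneg_right hpn hD0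
    _ ≤ (n:ℝ)^2 * ((1/(2*(n:ℝ)^2-2*(n:ℝ)+1)^2) * (1/(2*(j:ℝ)*((j:ℝ)+1)))) :=
        mul_le_mul_of_nonneg_left h1 (by positivity)
    _ = ((n:ℝ)^2/(2*(n:ℝ)^2-2*(n:ℝ)+1)^2) * (1/(2*(j:ℝ)*((j:ℝ)+1))) := by ring

private lemma term1R (n p j : ℕ) (hn1 : 1 ≤ n) (hj : 1 ≤ j) (hp : p = n + j) :
    (p:ℝ)^2/(((p:ℝ)^4-(n:ℝ)^4)^2) ≤
      (1/(2*(n:ℝ)^2-2*(n:ℝ)+1)^2) * (1/(2*(j:ℝ)*((j:ℝ)+1))) := by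
  have h0 := term0R n p j hn1 hj hp
  have hn0' : (0:ℝ) < (n:ℝ) := by exact_mod_cast hn1
  have hq0 : (0:ℝ) < 2*(n:ℝ)^2-2*(n:ℝ)+1 := by nlinarith
  have hpn : (n:ℝ)^2*(p:ℝ)^2 ≤ (p:ℝ)^4 := by
    have h2 : (n:ℝ) ≤ (p:ℝ) := by exact_mod_cast (by omega : n ≤ p)
    have hsq : (n:ℝ)^2 ≤ (p:ℝ)^2 := by nlinarith [Nat.cast_nonneg (α := ℝ) n]
    nlinarith [sq_nonneg ((p:ℝ)), mul_le_mul_of_nonneg_right hsq (sq_nonneg ((p:ℝ)))]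
  have hD0 : (0:ℝ) ≤ 1/(((p:ℝ)^4-(n:ℝ)^4)^2) := by positivity
  have hplt : (n:ℝ) < (p:ℝ) := by exact_mod_cast (by omega : n < p)
  have hD : (0:ℝ) < (((p:ℝ)^4-(n:ℝ)^4)^2) := by
    have h4 : (n:ℝ)^4 < (p:ℝ)^4 :=
      pow_lt_pow_left₀ hplt (Nat.cast_nonneg (α := ℝ) n) (by norm_num)
    have : (p:ℝ)^4-(n:ℝ)^4 ≠ 0 := by linarith
    positivity
  calc (p:ℝ)^2/(((p:ℝ)^4-(n:ℝ)^4)^2)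
      = ((n:ℝ)^2*(p:ℝ)^2) * (1/(((p:ℝ)^4-(n:ℝ)^4)^2)) * (1/(n:ℝ)^2) := by
        field_simp
    _ ≤ ((p:ℝ)^4) * (1/(((p:ℝ)^4-(n:ℝ)^4)^2)) * (1/(n:ℝ)^2) := by
        apply mul_le_mul_of_nonneg_right (mul_le_mul_of_nonneg_right hpn hD0) (by positivity)
    _ = ((p:ℝ)^4/(((p:ℝ)^4-(n:ℝ)^4)^2)) * (1/(n:ℝ)^2) := by ring
    _ ≤ (((n:ℝ)^2/(2*(n:ℝ)^2-2*(n:ℝ)+1)^2) * (1/(2*(j:ℝ)*((j:ℝ)+1)))) * (1/(n:ℝ)^2) :=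
        mul_le_mul_of_nonneg_right h0 (by positivity)
    _ = (1/(2*(n:ℝ)^2-2*(n:ℝ)+1)^2) * (1/(2*(j:ℝ)*((j:ℝ)+1))) := by
        field_simp

private lemma main0 (n : ℕ) (hn : 1 ≤ n) :
    ∀ N, ∑ p ∈ range N, (if 1 ≤ p ∧ p ≠ n then (p:ℝ)^4/((p:ℝ)^4-(n:ℝ)^4)^2 else 0)
      ≤ (n:ℝ)^2/(2*(n:ℝ)^2-2*(n:ℝ)+1)^2 := by
  have hn0 : (0:ℝ) < (n:ℝ) := by exact_mod_cast hn
  have hq0 : (0:ℝ) < 2*(n:ℝ)^2-2*(n:ℝ)+1 := by nlinarith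
  refine assemble _ n hn _ (by positivity) ?_ (by norm_num) (by simp) ?_ ?_
  · intro p; split
    · positivity
    · exact le_rfl
  · intro i hi
    have hcond : 1 ≤ i+1 ∧ i+1 ≠ n := ⟨by omega, by omega⟩
    rw [if_pos hcond]
    have h := term0L n (i+1) (n-1-i) (by omega) (by omega) (by omega)
    calc ((i+1:ℕ):ℝ)^4/(((i+1:ℕ):ℝ)^4-(n:ℝ)^4)^2
        ≤ ((n:ℝ)^2/(2*(n:ℝ)^2-2*(n:ℝ)+1)^2) * (1/(2*((n-1-i:ℕ):ℝ)*(((n-1-i:ℕ):ℝ)+1))) := h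
      _ = ((n:ℝ)^2/(2*(n:ℝ)^2-2*(n:ℝ)+1)^2/2) * (1/(((n-1-i:ℕ):ℝ)*(((n-1-i:ℕ):ℝ)+1))) :=
          half_helper _ _
  · intro i
    have hcond : 1 ≤ n+1+i ∧ n+1+i ≠ n := ⟨by omega, by omega⟩
    rw [if_pos hcond]
    have h := term0R n (n+1+i) (i+1) hn (by omega) (by omega)
    have e1 : ((i+1:ℕ):ℝ) = (i:ℝ)+1 := by push_cast; ring
    rw [e1] at h
    calc ((n+1+i:ℕ):ℝ)^4/(((n+1+i:ℕ):ℝ)^4-(n:ℝ)^4)^2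
        ≤ ((n:ℝ)^2/(2*(n:ℝ)^2-2*(n:ℝ)+1)^2) * (1/(2*((i:ℝ)+1)*(((i:ℝ)+1)+1))) := h
      _ = ((n:ℝ)^2/(2*(n:ℝ)^2-2*(n:ℝ)+1)^2/2) * (1/(((i:ℝ)+1)*(((i:ℝ)+1)+1))) :=
          half_helper _ _
      _ = ((n:ℝ)^2/(2*(n:ℝ)^2-2*(n:ℝ)+1)^2/2) * (1/(((i:ℝ)+1)*((i:ℝ)+2))) := by
          have e2 : (i:ℝ)+1+1 = (i:ℝ)+2 := by ring
          rw [e2]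

private lemma main1 (n : ℕ) (hn : 1 ≤ n) :
    ∀ N, ∑ p ∈ range N, (if 1 ≤ p ∧ p ≠ n then (p:ℝ)^2/((p:ℝ)^4-(n:ℝ)^4)^2 else 0)
      ≤ 1/(2*(n:ℝ)^2-2*(n:ℝ)+1)^2 := by
  have hn0 : (0:ℝ) < (n:ℝ) := by exact_mod_cast hn
  have hq0 : (0:ℝ) < 2*(n:ℝ)^2-2*(n:ℝ)+1 := by nlinarith
  refine assemble _ n hn _ (by positivity) ?_ (by norm_num) (by simp) ?_ ?_
  · intro p; split
    · positivity
    · exact le_rfl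
  · intro i hi
    have hcond : 1 ≤ i+1 ∧ i+1 ≠ n := ⟨by omega, by omega⟩
    rw [if_pos hcond]
    have h := term1L n (i+1) (n-1-i) (by omega) (by omega) (by omega)
    calc ((i+1:ℕ):ℝ)^2/(((i+1:ℕ):ℝ)^4-(n:ℝ)^4)^2
        ≤ (1/(2*(n:ℝ)^2-2*(n:ℝ)+1)^2) * (1/(2*((n-1-i:ℕ):ℝ)*(((n-1-i:ℕ):ℝ)+1))) := h
      _ = (1/(2*(n:ℝ)^2-2*(n:ℝ)+1)^2/2) * (1/(((n-1-i:ℕ):ℝ)*(((n-1-i:ℕ):ℝ)+1))) :=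
          half_helper _ _
  · intro i
    have hcond : 1 ≤ n+1+i ∧ n+1+i ≠ n := ⟨by omega, by omega⟩
    rw [if_pos hcond]
    have h := term1R n (n+1+i) (i+1) hn (by omega) (by omega)
    have e1 : ((i+1:ℕ):ℝ) = (i:ℝ)+1 := by push_cast; ring
    rw [e1] at h
    calc ((n+1+i:ℕ):ℝ)^2/(((n+1+i:ℕ):ℝ)^4-(n:ℝ)^4)^2
        ≤ (1/(2*(n:ℝ)^2-2*(n:ℝ)+1)^2) * (1/(2*((i:ℝ)+1)*(((i:ℝ)+1)+1))) := h
      _ = (1/(2*(n:ℝ)^2-2*(n:ℝ)+1)^2/2) * (1/(((i:ℝ)+1)*(((i:ℝ)+1)+1))) :=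
          half_helper _ _
      _ = (1/(2*(n:ℝ)^2-2*(n:ℝ)+1)^2/2) * (1/(((i:ℝ)+1)*((i:ℝ)+2))) := by
          have e2 : (i:ℝ)+1+1 = (i:ℝ)+2 := by ring
          rw [e2]


/-- reflected square sum -/
private lemma SB1 (m : ℕ) : ∑ i ∈ range m, (1:ℝ)/(((m:ℝ))-(i:ℝ))^2 ≤ 65159/39600 := by
  have e : ∀ i ∈ range m, (1:ℝ)/(((m:ℝ))-(i:ℝ))^2
      = (1:ℝ)/((((m-1-i:ℕ)):ℝ)+1)^2 := by
    intro i hi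
    have hi' : i < m := Finset.mem_range.mp hi
    have h1 : ((m-1-i:ℕ):ℝ) + 1 = (m:ℝ)-(i:ℝ) := by
      have h2 : (m-1-i) + 1 = m - i := by omega
      have h3 : ((m-i:ℕ):ℝ) = (m:ℝ)-(i:ℝ) := by
        push_cast [Nat.cast_sub (le_of_lt hi')]; ring
      rw [← h3, ← h2]; push_cast; ring
    rw [h1]
  rw [Finset.sum_congr rfl e]
  have hrefl := Finset.sum_range_reflect (fun j : ℕ => (1:ℝ)/(((j:ℝ))+1)^2) m
  rw [hrefl]
  exact sq_sum_le m

/-- reflected harmonic sum -/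
private lemma SB3 (m : ℕ) (hm : 1 ≤ m) :
    ∑ i ∈ range m, (1:ℝ)/(((m:ℝ))-(i:ℝ)) ≤ 1 + Real.log m := by
  have e : ∀ i ∈ range m, (1:ℝ)/(((m:ℝ))-(i:ℝ))
      = (1:ℝ)/((((m-1-i:ℕ)):ℝ)+1) := by
    intro i hi
    have hi' : i < m := Finset.mem_range.mp hi
    have h1 : ((m-1-i:ℕ):ℝ) + 1 = (m:ℝ)-(i:ℝ) := by
      have h2 : (m-1-i) + 1 = m - i := by omega
      have h3 : ((m-i:ℕ):ℝ) = (m:ℝ)-(i:ℝ) := by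
        push_cast [Nat.cast_sub (le_of_lt hi')]; ring
      rw [← h3, ← h2]; push_cast; ring
    rw [h1]
  rw [Finset.sum_congr rfl e]
  have hrefl := Finset.sum_range_reflect (fun j : ℕ => (1:ℝ)/(((j:ℝ))+1)) m
  rw [hrefl]
  exact harmonic_le m hm

/-- log x / x is antitone past m when log m ≥ 1 -/
private lemma log_div_le (m x : ℝ) (hm0 : 0 < m) (hm : 1 ≤ Real.log m) (hx : m ≤ x) :
    Real.log x / x ≤ Real.log m / m := by
  have hx0 : 0 < x := lt_of_lt_of_le hm0 hx
  have h1 : Real.log x ≤ Real.log m + (x/m - 1) := by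
    have h2 : Real.log (x/m) ≤ x/m - 1 := Real.log_le_sub_one_of_pos (by positivity)
    have h3 : Real.log (x/m) = Real.log x - Real.log m :=
      Real.log_div (by positivity) (by positivity)
    linarith [h3 ▸ h2]
  rw [div_le_div_iff₀ hx0 hm0]
  have h4 : x/m*m = x := by field_simp
  have h5 : (x-m)*1 ≤ (x-m)*Real.log m :=
    mul_le_mul_of_nonneg_left hm (by linarith)
  nlinarith [mul_le_mul_of_nonneg_right h1 (le_of_lt hm0)]

private lemma log32_le : Real.log 32 ≤ 3.465736 := by
  have h : (32:ℝ) = 2^5 := by norm_num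
  rw [h, Real.log_pow]
  push_cast
  nlinarith [Real.log_two_lt_d9]

/-- the final numeric inequality for the analytic regime -/
private lemma k2_final (n : ℕ) (hn : 32 ≤ n) :
    (2*(n:ℝ)^2-2*(n:ℝ)+1)^2 * ((1/(16*(n:ℝ)^4))*(65159/39600) + (13/(16*(n:ℝ)^4))*(1/(2*(n:ℝ)))
      + (3/(16*(n:ℝ)^5))*(1+Real.log (n:ℝ)) + (3/(16*(n:ℝ)^5))*(Real.log 2)
      + (1/(2*(n:ℝ)^3))*(3/(8*(n:ℝ)^2)))
    + (1/4 - 1/(n:ℝ)) + 25559/158400 ≤ 1 := by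
  have hx : (32:ℝ) ≤ (n:ℝ) := by exact_mod_cast hn
  have hx0 : (0:ℝ) < (n:ℝ) := by linarith
  set x := (n:ℝ) with hx'
  have hq2a : (2*x^2-2*x+1)^2 ≤ 4*x^4-3*x^3 := by nlinarith [sq_nonneg (x-1), sq_nonneg x]
  have hq2b : (2*x^2-2*x+1)^2 ≤ 4*x^4 := by nlinarith [sq_nonneg (x-1), sq_nonneg x]
  have hl2 : Real.log 2 ≤ 0.6931472 := by nlinarith [Real.log_two_lt_d9]
  have hl2' : (0:ℝ) ≤ Real.log 2 := Real.log_nonneg (by norm_num)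
  have hlx0 : (0:ℝ) ≤ Real.log x := Real.log_nonneg (by linarith)
  have hld : Real.log x / x ≤ Real.log 32 / 32 := by
    apply log_div_le 32 x (by norm_num) _ hx
    rw [Real.le_log_iff_exp_le (by norm_num : (0:ℝ) < 32)]
    nlinarith [Real.exp_one_lt_d9]
  have hld2 : Real.log x / x ≤ 3.465736/32 := by
    calc Real.log x / x ≤ Real.log 32 / 32 := hld
      _ ≤ 3.465736/32 := by linarith [log32_le]
  have hinv : 1/x ≤ 1/32 := by
    apply one_div_le_one_div_of_le (by norm_num) hx
  -- bound the big product termwise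
  have hq0 : (0:ℝ) ≤ (2*x^2-2*x+1)^2 := sq_nonneg _
  have T1 : (2*x^2-2*x+1)^2 * ((1/(16*x^4))*(65159/39600))
      ≤ 65159/158400 - (65159/211200)*(1/x) := by
    have e1 : (4*x^4-3*x^3) * ((1/(16*x^4))*(65159/39600))
        = 65159/158400 - (65159/211200)*(1/x) := by
      field_simp
      ring
    rw [← e1]
    apply mul_le_mul_of_nonneg_right hq2a (by positivity)
  have T2 : (2*x^2-2*x+1)^2 * ((13/(16*x^4))*(1/(2*x))) ≤ (13/8)*(1/x) := by
    have e1 : (4*x^4) * ((13/(16*x^4))*(1/(2*x))) = (13/8)*(1/x) := by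
      field_simp; ring
    rw [← e1]
    apply mul_le_mul_of_nonneg_right hq2b (by positivity)
  have T3 : (2*x^2-2*x+1)^2 * ((3/(16*x^5))*(1+Real.log x))
      ≤ (3/4)*(1/x) + (3/4)*(Real.log x/x) := by
    have e1 : (4*x^4) * ((3/(16*x^5))*(1+Real.log x))
        = (3/4)*(1/x) + (3/4)*(Real.log x/x) := by
      field_simp; ring
    rw [← e1]
    apply mul_le_mul_of_nonneg_right hq2b (by positivity)
  have T4 : (2*x^2-2*x+1)^2 * ((3/(16*x^5))*(Real.log 2)) ≤ (3/4)*(Real.log 2)*(1/x) := by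
    have e1 : (4*x^4) * ((3/(16*x^5))*(Real.log 2)) = (3/4)*(Real.log 2)*(1/x) := by
      field_simp; ring
    rw [← e1]
    apply mul_le_mul_of_nonneg_right hq2b (by positivity)
  have T5 : (2*x^2-2*x+1)^2 * ((1/(2*x^3))*(3/(8*x^2))) ≤ (3/4)*(1/x) := by
    have e1 : (4*x^4) * ((1/(2*x^3))*(3/(8*x^2))) = (3/4)*(1/x) := by
      field_simp; ring
    rw [← e1]
    apply mul_le_mul_of_nonneg_right hq2b (by positivity)
  have hsplit : (2*x^2-2*x+1)^2 * ((1/(16*x^4))*(65159/39600) + (13/(16*x^4))*(1/(2*x))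
      + (3/(16*x^5))*(1+Real.log x) + (3/(16*x^5))*(Real.log 2)
      + (1/(2*x^3))*(3/(8*x^2)))
      = (2*x^2-2*x+1)^2 * ((1/(16*x^4))*(65159/39600))
      + (2*x^2-2*x+1)^2 * ((13/(16*x^4))*(1/(2*x)))
      + (2*x^2-2*x+1)^2 * ((3/(16*x^5))*(1+Real.log x))
      + (2*x^2-2*x+1)^2 * ((3/(16*x^5))*(Real.log 2))
      + (2*x^2-2*x+1)^2 * ((1/(2*x^3))*(3/(8*x^2))) := by ring
  rw [hsplit]
  have hl2x : (3/4)*(Real.log 2)*(1/x) ≤ (3/4)*(0.6931472)*(1/x) := by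
    apply mul_le_mul_of_nonneg_right _ (by positivity)
    nlinarith
  have hinv0 : (0:ℝ) ≤ 1/x := by positivity
  linarith [T1, T2, T3, T4, T5, hinv, hld2, hl2x, hlx0, hinv0]


private lemma left_reduce (F : ℕ → ℝ) (n : ℕ) (hn : 1 ≤ n) (h0 : F 0 = 0) (hnn : F n = 0) :
    ∑ p ∈ range (n+1), F p = ∑ i ∈ range (n-1), F (i+1) := by
  obtain ⟨m, rfl⟩ : ∃ m, n = m+1 := ⟨n-1, by omega⟩
  rw [Finset.sum_range_succ' F (m+1), h0, add_zero, Finset.sum_range_succ, hnn, add_zero]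
  simp

private lemma glue (F : ℕ → ℝ) (n : ℕ) (hF0 : ∀ p, 0 ≤ F p) (C D : ℝ)
    (hfin : ∑ p ∈ range (n+1), F p + F (n+1) ≤ C)
    (htail : ∀ R, ∑ i ∈ range R, F (n+2+i) ≤ D) :
    ∀ N, ∑ p ∈ range N, F p ≤ C + D := by
  intro N
  have hsub : ∑ p ∈ range N, F p ≤ ∑ p ∈ range (max N (n+2)), F p :=
    Finset.sum_le_sum_of_subset_of_nonneg
      (Finset.range_subset_range.mpr (le_max_left _ _)) (fun i _ _ => hF0 i)
  obtain ⟨R, hR'⟩ : ∃ R, max N (n+2) = (n+2) + R := ⟨max N (n+2) - (n+2), by omega⟩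
  rw [hR', Finset.sum_range_add, Finset.sum_range_succ] at hsub
  linarith [htail R, hfin, hsub]

private lemma const_inv_helper (a c t : ℝ) : (1:ℝ)/(c*t) = (1/c)*(1/t) := by
  rw [one_div, mul_inv, one_div, one_div]

private lemma coef_inv_helper (a c t : ℝ) : a/(c*t) = (a/c)*(1/t) := by
  rw [div_mul_div_comm, mul_one]

private lemma main2 (n : ℕ) (hn : 1 ≤ n) :
    ∀ N, ∑ p ∈ range N, (if 1 ≤ p ∧ p ≠ n then 1/((p:ℝ)^4-(n:ℝ)^4)^2 else 0)
      ≤ 1/((n:ℝ)^2*(2*(n:ℝ)^2-2*(n:ℝ)+1)^2) := by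
  have hx1 : (1:ℝ) ≤ (n:ℝ) := by exact_mod_cast hn
  have hx0 : (0:ℝ) < (n:ℝ) := by linarith
  have hq0 : (0:ℝ) < 2*(n:ℝ)^2-2*(n:ℝ)+1 := by nlinarith
  set F := fun p : ℕ => (if 1 ≤ p ∧ p ≠ n then 1/((p:ℝ)^4-(n:ℝ)^4)^2 else 0) with hF'
  have hF0 : ∀ p, 0 ≤ F p := by
    intro p; rw [hF']; dsimp only; split
    · positivity
    · exact le_rfl
  set B2 := 1/((n:ℝ)^2*(2*(n:ℝ)^2-2*(n:ℝ)+1)^2) with hB2'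
  have hB2pos : 0 < B2 := by rw [hB2']; positivity
  -- tail bound
  have htail : ∀ R, ∑ i ∈ range R, F (n+2+i) ≤ B2 * (25559/158400) := by
    intro R
    have hterm : ∀ i : ℕ, F (n+2+i) ≤ (B2*(1/4)) * (1/((i:ℝ)+2)^2) := by
      intro i
      rw [hF']; dsimp only
      rw [if_pos ⟨by omega, by omega⟩]
      have h := core2R (n:ℝ) ((n+2+i:ℕ):ℝ) ((i:ℝ)+2) hx1 (by linarith [Nat.cast_nonneg (α := ℝ) i])
        (by push_cast; ring)
      calc 1/(((n+2+i:ℕ):ℝ)^4-(n:ℝ)^4)^2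
          ≤ (1/((n:ℝ)^2*(2*(n:ℝ)^2-2*(n:ℝ)+1)^2)) * (1/(4*((i:ℝ)+2)^2)) := h
        _ = (B2*(1/4)) * (1/((i:ℝ)+2)^2) := by
            rw [hB2']
            rw [show (4*((i:ℝ)+2)^2) = 4*(((i:ℝ)+2)^2) from by ring]
            rw [const_inv_helper 1 4 (((i:ℝ)+2)^2)]
            ring
    calc ∑ i ∈ range R, F (n+2+i) ≤ ∑ i ∈ range R, (B2*(1/4)) * (1/((i:ℝ)+2)^2) :=
          Finset.sum_le_sum (fun i _ => hterm i)
      _ = (B2*(1/4)) * ∑ i ∈ range R, (1:ℝ)/((i:ℝ)+2)^2 := by rw [Finset.mul_sum]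
      _ ≤ (B2*(1/4)) * (25559/39600) := by
          apply mul_le_mul_of_nonneg_left (sq_sum_le2 R) (by positivity)
      _ = B2 * (25559/158400) := by ring
  -- now two regimes for the finite part
  rcases le_or_gt 32 n with hbig | hsmall
  · -- analytic regime
    have hx32 : (32:ℝ) ≤ (n:ℝ) := by exact_mod_cast hbig
    set x := (n:ℝ) with hxdef
    set Br := (1/(16*x^4))*(65159/39600) + (13/(16*x^4))*(1/(2*x))
      + (3/(16*x^5))*(1+Real.log x) + (3/(16*x^5))*(Real.log 2)
      + (1/(2*x^3))*(3/(8*x^2)) with hBr'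
    -- left sum bound
    have hm1 : (1:ℕ) ≤ n - 1 := by omega
    have hcastm : ((n-1:ℕ):ℝ) = x - 1 := by
      push_cast [Nat.cast_sub hn]; ring
    have hLeft : ∑ p ∈ range (n+1), F p ≤ (1/x^2) * Br := by
      rw [left_reduce F n hn (by rw [hF']; norm_num) (by rw [hF']; simp)]
      have hterm : ∀ i ∈ range (n-1), F (i+1) ≤ (1/x^2) *
          (1/(16*x^4*(x-((i:ℝ)+1))^2) + 13/(16*x^4*(x+((i:ℝ)+1))^2)
           + 3/(16*x^5*(x-((i:ℝ)+1))) + 3/(16*x^5*(x+((i:ℝ)+1))) + 1/(2*x^3*(x+((i:ℝ)+1))^3)) := by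
        intro i hi
        have hilt : i < n - 1 := Finset.mem_range.mp hi
        rw [hF']; dsimp only
        rw [if_pos ⟨by omega, by omega⟩]
        set P := (i:ℝ)+1 with hP'
        have hP1 : 1 ≤ P := by rw [hP']; linarith [Nat.cast_nonneg (α := ℝ) i]
        have hPN : P + 1 ≤ x := by
          rw [hP', hxdef]
          have : ((i+2:ℕ):ℝ) ≤ (n:ℝ) := by exact_mod_cast (by omega : i+2 ≤ n)
          push_cast at this; linarith
        have hkp := k2_point x P hP1 hPN
        have hE : (((i+1:ℕ):ℝ)^4-x^4)^2 = ((x-P)*((x+P)*(x^2+P^2)))^2 := by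
          rw [hP']; push_cast; ring
        have hEpos : (0:ℝ) < ((x-P)*((x+P)*(x^2+P^2)))^2 := by
          have h1 : 0 < x - P := by linarith
          have h2 : 0 < x + P := by linarith
          have h3 : 0 < x^2 + P^2 := by positivity
          positivity
        rw [hE]
        have e1 : (1/x^2) * (x^2/(((x-P)*((x+P)*(x^2+P^2)))^2))
            = 1/(((x-P)*((x+P)*(x^2+P^2)))^2) := by
          have hS : (((x-P)*((x+P)*(x^2+P^2)))^2) ≠ 0 := ne_of_gt hEpos
          have hx2 : (x:ℝ)^2 ≠ 0 := by positivity
          field_simp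
        rw [← e1]
        apply mul_le_mul_of_nonneg_left _ (by positivity)
        have eassoc : ((x-P)*((x+P)*(x^2+P^2)))^2 = ((x-P)*(x+P)*(x^2+P^2))^2 := by ring
        rw [eassoc]
        exact hkp
      calc ∑ i ∈ range (n-1), F (i+1)
          ≤ ∑ i ∈ range (n-1), ((1/x^2) *
            (1/(16*x^4*(x-((i:ℝ)+1))^2) + 13/(16*x^4*(x+((i:ℝ)+1))^2)
             + 3/(16*x^5*(x-((i:ℝ)+1))) + 3/(16*x^5*(x+((i:ℝ)+1))) + 1/(2*x^3*(x+((i:ℝ)+1))^3))) :=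
            Finset.sum_le_sum hterm
        _ = (1/x^2) * ∑ i ∈ range (n-1),
            (1/(16*x^4*(x-((i:ℝ)+1))^2) + 13/(16*x^4*(x+((i:ℝ)+1))^2)
             + 3/(16*x^5*(x-((i:ℝ)+1))) + 3/(16*x^5*(x+((i:ℝ)+1))) + 1/(2*x^3*(x+((i:ℝ)+1))^3)) := by
            rw [Finset.mul_sum]
        _ ≤ (1/x^2) * Br := by
            apply mul_le_mul_of_nonneg_left _ (by positivity)
            rw [Finset.sum_add_distrib, Finset.sum_add_distrib, Finset.sum_add_distrib,
              Finset.sum_add_distrib]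
            have hS1 : ∑ i ∈ range (n-1), (1:ℝ)/(16*x^4*(x-((i:ℝ)+1))^2)
                ≤ (1/(16*x^4))*(65159/39600) := by
              have e : ∀ i ∈ range (n-1), (1:ℝ)/(16*x^4*(x-((i:ℝ)+1))^2)
                  = (1/(16*x^4))*(1/((((n-1:ℕ)):ℝ)-(i:ℝ))^2) := by
                intro i _
                rw [const_inv_helper 1 (16*x^4) ((x-((i:ℝ)+1))^2), hcastm]
                rw [show x-((i:ℝ)+1) = x-1-(i:ℝ) from by ring]
              rw [Finset.sum_congr rfl e, ← Finset.mul_sum]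
              apply mul_le_mul_of_nonneg_left _ (by positivity)
              exact SB1 (n-1)
            have hS2 : ∑ i ∈ range (n-1), (13:ℝ)/(16*x^4*(x+((i:ℝ)+1))^2)
                ≤ (13/(16*x^4))*(1/(2*x)) := by
              have e : ∀ i ∈ range (n-1), (13:ℝ)/(16*x^4*(x+((i:ℝ)+1))^2)
                  = (13/(16*x^4))*(1/(x+1+(i:ℝ))^2) := by
                intro i _
                rw [coef_inv_helper 13 (16*x^4) ((x+((i:ℝ)+1))^2)]
                rw [show x+((i:ℝ)+1) = x+1+(i:ℝ) from by ring]
              rw [Finset.sum_congr rfl e, ← Finset.mul_sum]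
              apply mul_le_mul_of_nonneg_left _ (by positivity)
              have h1 := shift_sq_sum x hx1 (n-1)
              rw [hcastm] at h1
              have h2 : 1/(2*x) ≤ 1/(x+(x-1)) := by
                apply one_div_le_one_div_of_le (by linarith) (by linarith)
              have h3 : (0:ℝ) < x + (x-1) := by linarith
              have e4 : 1/x = 1/(2*x) + 1/(2*x) := by
                field_simp
                ring
              linarith
            have hS3 : ∑ i ∈ range (n-1), (3:ℝ)/(16*x^5*(x-((i:ℝ)+1)))
                ≤ (3/(16*x^5))*(1+Real.log x) := by
              have e : ∀ i ∈ range (n-1), (3:ℝ)/(16*x^5*(x-((i:ℝ)+1)))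
                  = (3/(16*x^5))*(1/((((n-1:ℕ)):ℝ)-(i:ℝ))) := by
                intro i _
                rw [coef_inv_helper 3 (16*x^5) (x-((i:ℝ)+1)), hcastm]
                rw [show x-((i:ℝ)+1) = x-1-(i:ℝ) from by ring]
              rw [Finset.sum_congr rfl e, ← Finset.mul_sum]
              apply mul_le_mul_of_nonneg_left _ (by positivity)
              have h1 := SB3 (n-1) hm1
              have h2 : Real.log ((n-1:ℕ):ℝ) ≤ Real.log x := by
                apply Real.log_le_log (by rw [hcastm]; linarith) (by rw [hcastm]; linarith)
              linarith
            have hS4 : ∑ i ∈ range (n-1), (3:ℝ)/(16*x^5*(x+((i:ℝ)+1)))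
                ≤ (3/(16*x^5))*(Real.log 2) := by
              have e : ∀ i ∈ range (n-1), (3:ℝ)/(16*x^5*(x+((i:ℝ)+1)))
                  = (3/(16*x^5))*(1/(x+1+(i:ℝ))) := by
                intro i _
                rw [coef_inv_helper 3 (16*x^5) (x+((i:ℝ)+1))]
                rw [show x+((i:ℝ)+1) = x+1+(i:ℝ) from by ring]
              rw [Finset.sum_congr rfl e, ← Finset.mul_sum]
              apply mul_le_mul_of_nonneg_left _ (by positivity)
              have h1 := harmonic_shift x hx1 (n-1)
              rw [hcastm] at h1
              have h2 : Real.log (x+(x-1)) ≤ Real.log (2*x) := by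
                apply Real.log_le_log (by linarith) (by linarith)
              have h3 : Real.log (2*x) = Real.log 2 + Real.log x := by
                rw [Real.log_mul (by norm_num) (by linarith)]
              linarith
            have hS5 : ∑ i ∈ range (n-1), (1:ℝ)/(2*x^3*(x+((i:ℝ)+1))^3)
                ≤ (1/(2*x^3))*(3/(8*x^2)) := by
              have e : ∀ i ∈ range (n-1), (1:ℝ)/(2*x^3*(x+((i:ℝ)+1))^3)
                  = (1/(2*x^3))*(1/(x+1+(i:ℝ))^3) := by
                intro i _
                rw [const_inv_helper 1 (2*x^3) ((x+((i:ℝ)+1))^3)]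
                rw [show x+((i:ℝ)+1) = x+1+(i:ℝ) from by ring]
              rw [Finset.sum_congr rfl e, ← Finset.mul_sum]
              apply mul_le_mul_of_nonneg_left _ (by positivity)
              have h1 := shift_cube_sum x hx1 (n-1)
              rw [hcastm] at h1
              have h2 : 1/(8*x^2) ≤ 1/(2*(x+(x-1))^2) := by
                apply one_div_le_one_div_of_le (by nlinarith) (by nlinarith)
              have e4 : 1/(2*x^2) = 3/(8*x^2) + 1/(8*x^2) := by ring
              linarith
            rw [hBr']
            linarith [hS1, hS2, hS3, hS4, hS5]
      done
    -- F(n+1) bound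
    have hfR1 : F (n+1) ≤ B2 * (1/4 - 1/x) := by
      rw [hF']; dsimp only
      rw [if_pos ⟨by omega, by omega⟩]
      have hE : (((n+1:ℕ):ℝ)^4-x^4)^2 = (((2*x+1)*(2*x^2+2*x+1)))^2 := by
        push_cast; ring
      rw [hE]
      have hEpos : (0:ℝ) < ((2*x+1)*(2*x^2+2*x+1))^2 := by positivity
      have ht5 := fR1bound x hx32
      have e1 : 1/(((2*x+1)*(2*x^2+2*x+1))^2)
          = (x^2*(2*x^2-2*x+1)^2/(((2*x+1)*(2*x^2+2*x+1))^2)) * B2 := by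
        rw [hB2', hxdef]
        field_simp
        have h1n : (1:ℝ) ≤ (n:ℝ) := by exact_mod_cast hn
        exact (div_self (ne_of_gt (by nlinarith [h1n]))).symm
      rw [e1]
      rw [hB2']
      calc (x^2*(2*x^2-2*x+1)^2/(((2*x+1)*(2*x^2+2*x+1))^2)) * (1/(x^2*(2*x^2-2*x+1)^2))
          ≤ (1/4-1/x) * (1/(x^2*(2*x^2-2*x+1)^2)) := by
            apply mul_le_mul_of_nonneg_right ht5 (by positivity)
        _ = 1/(x^2*(2*x^2-2*x+1)^2) * (1/4-1/x) := by ring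
    -- conclude
    have hfin : ∑ p ∈ range (n+1), F p + F (n+1)
        ≤ B2 * ((2*x^2-2*x+1)^2*Br + (1/4 - 1/x)) := by
      have e2 : B2 * ((2*x^2-2*x+1)^2*Br) = (1/x^2) * Br := by
        rw [hB2', hxdef]
        field_simp
        have h1n : (1:ℝ) ≤ (n:ℝ) := by exact_mod_cast hn
        have hu : (1 - (n:ℝ)*2 + (n:ℝ)^2*2) ≠ 0 := ne_of_gt (by nlinarith [h1n])
        linear_combination Br * (mul_inv_cancel₀ hu)
      have := add_le_add hLeft hfR1
      calc ∑ p ∈ range (n+1), F p + F (n+1) ≤ (1/x^2)*Br + B2*(1/4-1/x) := this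
        _ = B2 * ((2*x^2-2*x+1)^2*Br) + B2*(1/4-1/x) := by rw [e2]
        _ = B2 * ((2*x^2-2*x+1)^2*Br + (1/4 - 1/x)) := by ring
    intro N
    have hglue := glue F n hF0 _ _ hfin htail N
    have hfinal := k2_final n hbig
    rw [← hBr', ← hxdef] at hfinal
    calc ∑ p ∈ range N, F p
        ≤ B2 * ((2*x^2-2*x+1)^2*Br + (1/4 - 1/x)) + B2 * (25559/158400) := hglue
      _ = B2 * ((2*x^2-2*x+1)^2*Br + (1/4 - 1/x) + 25559/158400) := by ring
      _ ≤ B2 * 1 := by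
          apply mul_le_mul_of_nonneg_left _ (le_of_lt hB2pos)
          linarith [hfinal]
      _ = B2 := by ring
  · -- brute-force regime : 1 ≤ n ≤ 31
    have hfin : ∑ p ∈ range (n+1), F p + F (n+1) ≤ B2 * (132841/158400) := by
      rw [hF', hB2']
      interval_cases n <;>
        · simp only [Finset.sum_range_succ, Finset.sum_range_zero]
          norm_num
    intro N
    have hglue := glue F n hF0 _ _ hfin htail N
    calc ∑ p ∈ range N, F p ≤ B2 * (132841/158400) + B2 * (25559/158400) := hglue
      _ = B2 := by ring


theorem stmt_2 (n : ℕ) (hn : 1 ≤ n) (k : ℕ) (hk : k ≤ 2) :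
    Summable (fun p : ℕ =>
      if 1 ≤ p ∧ p ≠ n then (p : ℝ) ^ (4 - 2 * k) / ((p : ℝ) ^ 4 - (n : ℝ) ^ 4) ^ 2 else 0) ∧
    Real.sqrt (∑' p : ℕ,
        if 1 ≤ p ∧ p ≠ n then (p : ℝ) ^ (4 - 2 * k) / ((p : ℝ) ^ 4 - (n : ℝ) ^ 4) ^ 2 else 0) ≤
      (n : ℝ) ^ ((1 : ℤ) - (k : ℤ)) / (2 * (n : ℝ) ^ 2 - 2 * (n : ℝ) + 1) := by
  have hx1 : (1:ℝ) ≤ (n:ℝ) := by exact_mod_cast hn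
  have hq0 : (0:ℝ) < 2*(n:ℝ)^2-2*(n:ℝ)+1 := by nlinarith
  interval_cases k
  · -- k = 0
    simp only [show (4 - 2*0 : ℕ) = 4 from rfl, Nat.cast_zero, sub_zero, zpow_one]
    have hb := main0 n hn
    have hnn : ∀ p : ℕ, 0 ≤ (if 1 ≤ p ∧ p ≠ n then (p:ℝ)^4/((p:ℝ)^4-(n:ℝ)^4)^2 else 0) := by
      intro p; split
      · positivity
      · exact le_rfl
    have hsummable := summable_of_sum_range_le hnn hb
    refine ⟨hsummable, ?_⟩
    have ht := Summable.tsum_le_of_sum_range_le hsummable hb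
    have he : (n:ℝ)^2/(2*(n:ℝ)^2-2*(n:ℝ)+1)^2 = ((n:ℝ)/(2*(n:ℝ)^2-2*(n:ℝ)+1))^2 := by
      rw [div_pow]
    calc Real.sqrt (∑' p : ℕ, if 1 ≤ p ∧ p ≠ n then (p:ℝ)^4/((p:ℝ)^4-(n:ℝ)^4)^2 else 0)
        ≤ Real.sqrt (((n:ℝ)/(2*(n:ℝ)^2-2*(n:ℝ)+1))^2) := Real.sqrt_le_sqrt (he ▸ ht)
      _ = (n:ℝ)/(2*(n:ℝ)^2-2*(n:ℝ)+1) := Real.sqrt_sq (by positivity)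
  · -- k = 1
    simp only [show (4 - 2*1 : ℕ) = 2 from rfl, Nat.cast_one, sub_self, zpow_zero]
    have hb := main1 n hn
    have hnn : ∀ p : ℕ, 0 ≤ (if 1 ≤ p ∧ p ≠ n then (p:ℝ)^2/((p:ℝ)^4-(n:ℝ)^4)^2 else 0) := by
      intro p; split
      · positivity
      · exact le_rfl
    have hsummable := summable_of_sum_range_le hnn hb
    refine ⟨hsummable, ?_⟩
    have ht := Summable.tsum_le_of_sum_range_le hsummable hb
    have he : 1/(2*(n:ℝ)^2-2*(n:ℝ)+1)^2 = ((1:ℝ)/(2*(n:ℝ)^2-2*(n:ℝ)+1))^2 := by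
      rw [div_pow, one_pow]
    calc Real.sqrt (∑' p : ℕ, if 1 ≤ p ∧ p ≠ n then (p:ℝ)^2/((p:ℝ)^4-(n:ℝ)^4)^2 else 0)
        ≤ Real.sqrt (((1:ℝ)/(2*(n:ℝ)^2-2*(n:ℝ)+1))^2) := Real.sqrt_le_sqrt (he ▸ ht)
      _ = (1:ℝ)/(2*(n:ℝ)^2-2*(n:ℝ)+1) := Real.sqrt_sq (by positivity)
  · -- k = 2
    simp only [show (4 - 2*2 : ℕ) = 0 from rfl, pow_zero]
    have hb := main2 n hn
    have hnn : ∀ p : ℕ, 0 ≤ (if 1 ≤ p ∧ p ≠ n then 1/((p:ℝ)^4-(n:ℝ)^4)^2 else 0) := by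
      intro p; split
      · positivity
      · exact le_rfl
    have hsummable := summable_of_sum_range_le hnn hb
    refine ⟨hsummable, ?_⟩
    have ht := Summable.tsum_le_of_sum_range_le hsummable hb
    have he : 1/((n:ℝ)^2*(2*(n:ℝ)^2-2*(n:ℝ)+1)^2)
        = ((n:ℝ)^(-1:ℤ)/(2*(n:ℝ)^2-2*(n:ℝ)+1))^2 := by
      have hx0 : (0:ℝ) < (n:ℝ) := by linarith
      rw [zpow_neg, zpow_one, div_pow]
      rw [inv_pow]
      field_simp
    have he2 : ((1:ℤ) - ((2:ℕ):ℤ)) = (-1 : ℤ) := by norm_num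
    rw [show ((2:ℕ):ℤ) = (2:ℤ) from rfl]
    rw [show ((1:ℤ) - (2:ℤ)) = (-1:ℤ) from by norm_num]
    calc Real.sqrt (∑' p : ℕ, if 1 ≤ p ∧ p ≠ n then 1/((p:ℝ)^4-(n:ℝ)^4)^2 else 0)
        ≤ Real.sqrt (((n:ℝ)^(-1:ℤ)/(2*(n:ℝ)^2-2*(n:ℝ)+1))^2) := Real.sqrt_le_sqrt (he ▸ ht)
      _ = (n:ℝ)^(-1:ℤ)/(2*(n:ℝ)^2-2*(n:ℝ)+1) := by
          apply Real.sqrt_sq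
          have hx0 : (0:ℝ) < (n:ℝ) := by linarith
          positivity
end

section
/- If a sequence (u_j) of nonnegative reals with u_0 = 1 satisfies u_{j+1} ≤ M·∑_{s=0}^{j} u_{j-s}·u_s for all j ≥ 0, where M > 0, then u_{j+1} ≤ (4M)^{j+1} · 2·(2j+1)!!/(2j+4)!! for all j ≥ 0, where (2j+1)!! and (2j+4)!! denote the odd and even double factorials. -/
open Nat Finset

lemma cat_fact (j : ℕ) : catalan (j+1) * ((j+1)! * (j+2)!) = (2*j+2)! := by
  have h1 := succ_mul_catalan_eq_centralBinom (j+1)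
  have h2 : (j+1) ≤ 2*(j+1) := by omega
  have h3 := Nat.choose_mul_factorial_mul_factorial h2
  have h4 : 2*(j+1) - (j+1) = j+1 := by omega
  rw [h4] at h3
  have : catalan (j+1) * ((j+1)! * (j+2)!) =
      ((j+1+1) * catalan (j+1)) * ((j+1)! * (j+1)!) := by
    rw [Nat.factorial_succ (j+1)]; ring
  rw [this, h1, Nat.centralBinom]
  calc (2*(j+1)).choose (j+1) * ((j+1)! * (j+1)!)
      = (2*(j+1)).choose (j+1) * (j+1)! * (j+1)! := by ring
    _ = (2*(j+1))! := h3
    _ = (2*j+2)! := by ring_nf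

lemma cat_db_nat (j : ℕ) :
    catalan (j+1) * (2*j+4)‼ = 4^(j+1) * 2 * (2*j+1)‼ := by
  have hpos : 0 < (2*j+2)‼ := Nat.doubleFactorial_pos _
  apply Nat.eq_of_mul_eq_mul_right hpos
  have e1 : (2*j+4)‼ = 2^(j+2) * (j+2)! := by
    have : 2*j+4 = 2*(j+2) := by omega
    rw [this, Nat.doubleFactorial_two_mul]
  have e2 : (2*j+2)‼ = 2^(j+1) * (j+1)! := by
    have : 2*j+2 = 2*(j+1) := by omega
    rw [this, Nat.doubleFactorial_two_mul]
  have e3 : (2*j+2)! = (2*j+2)‼ * (2*j+1)‼ := Nat.factorial_eq_mul_doubleFactorial (2*j+1)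
  calc catalan (j+1) * (2*j+4)‼ * (2*j+2)‼
      = (2^(j+2) * 2^(j+1)) * (catalan (j+1) * ((j+1)! * (j+2)!)) := by rw [e1, e2]; ring
    _ = (2^(j+2) * 2^(j+1)) * (2*j+2)! := by rw [cat_fact]
    _ = (2^(j+2) * 2^(j+1)) * ((2*j+2)‼ * (2*j+1)‼) := by rw [e3]
    _ = 4^(j+1) * 2 * (2*j+1)‼ * (2*j+2)‼ := by
        have : (2:ℕ)^(j+2) * 2^(j+1) = 4^(j+1) * 2 := by
          rw [show (4:ℕ) = 2^2 by norm_num, ← pow_mul]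
          rw [← pow_add, ← pow_succ]
          congr 1; omega
        rw [this]; ring

lemma cat_db (j : ℕ) : (catalan (j+1) : ℝ) =
    4^(j+1) * 2 * (Nat.doubleFactorial (2*j+1) : ℝ) / (Nat.doubleFactorial (2*j+4) : ℝ) := by
  have hpos : (0:ℝ) < (Nat.doubleFactorial (2*j+4) : ℝ) := by
    exact_mod_cast Nat.doubleFactorial_pos _
  rw [eq_div_iff (ne_of_gt hpos)]
  exact_mod_cast cat_db_nat j

lemma cat_rec (j : ℕ) :
    catalan (j+1) = ∑ s ∈ Finset.range (j+1), catalan (j - s) * catalan s := by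
  rw [catalan_succ', Nat.sum_antidiagonal_eq_sum_range_succ (fun x y => catalan x * catalan y) j]
  exact Finset.sum_congr rfl fun s _ => mul_comm _ _

theorem stmt_3 (u : ℕ → ℝ) (hpos : ∀ j, 0 ≤ u j) (h0 : u 0 = 1) (M : ℝ) (hM : 0 < M)
    (hrec : ∀ j : ℕ, u (j + 1) ≤ M * ∑ s ∈ Finset.range (j + 1), u (j - s) * u s) :
    ∀ j : ℕ, u (j + 1) ≤ (4 * M) ^ (j + 1) * 2 *
      (Nat.doubleFactorial (2 * j + 1) : ℝ) / (Nat.doubleFactorial (2 * j + 4) : ℝ) := by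
  have key : ∀ j : ℕ, u j ≤ M ^ j * catalan j := by
    intro j
    induction j using Nat.strong_induction_on with
    | _ j ih =>
      match j with
      | 0 => simp [h0]
      | (j+1) =>
        calc u (j+1) ≤ M * ∑ s ∈ Finset.range (j + 1), u (j - s) * u s := hrec j
          _ ≤ M * ∑ s ∈ Finset.range (j + 1),
                (M ^ (j-s) * catalan (j-s)) * (M ^ s * catalan s) := by
              apply mul_le_mul_of_nonneg_left _ hM.le
              apply Finset.sum_le_sum
              intro s hs
              exact mul_le_mul (ih (j-s) (by omega)) (ih s (by simp at hs; omega))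
                (hpos s) (by positivity)
          _ = M ^ (j+1) * ∑ s ∈ Finset.range (j + 1),
                (catalan (j-s) * catalan s : ℝ) := by
              rw [Finset.mul_sum, Finset.mul_sum]
              apply Finset.sum_congr rfl
              intro s hs
              simp only [Finset.mem_range] at hs
              have : M ^ (j-s) * M ^ s = M ^ j := by
                rw [← pow_add]; congr 1; omega
              calc M * (M ^ (j - s) * (catalan (j - s):ℝ) * (M ^ s * (catalan s:ℝ)))
                  = (M * (M ^ (j-s) * M ^ s)) * ((catalan (j - s):ℝ) * (catalan s:ℝ)) := by ring
                _ = M ^ (j + 1) * ((catalan (j - s):ℝ) * (catalan s:ℝ)) := by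
                    rw [this]; ring
          _ = M ^ (j+1) * catalan (j+1) := by
              rw [cat_rec j]; push_cast; ring
  intro j
  have := key (j+1)
  calc u (j+1) ≤ M ^ (j+1) * catalan (j+1) := this
    _ = (4 * M) ^ (j + 1) * 2 *
        (Nat.doubleFactorial (2 * j + 1) : ℝ) / (Nat.doubleFactorial (2 * j + 4) : ℝ) := by
      rw [cat_db j, mul_pow]
      ring
end

section
/- For all j ≥ 0, 2·(2j+1)!!/(2j+4)!! ≤ 1/((j+2)·√(π(j+1))). -/
open Real
open scoped Nat

theorem stmt_4 :
    ∀ j : ℕ,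
      2 * (Nat.doubleFactorial (2 * j + 1) : ℝ) / (Nat.doubleFactorial (2 * j + 4) : ℝ) ≤
        1 / (((j : ℝ) + 2) * Real.sqrt (Real.pi * ((j : ℝ) + 1))) := by
  intro j
  set n := j + 1 with hn
  set a : ℝ := (Nat.doubleFactorial (2 * j + 1) : ℝ) with ha
  set b : ℝ := (Nat.doubleFactorial (2 * j + 2) : ℝ) with hb
  have hapos : 0 < a := by positivity
  have hbpos : 0 < b := by positivity
  -- (2n)! = b * a
  have hfact : ((2 * n).factorial : ℝ) = b * a := by
    have : (2 * j + 1 + 1).factorial = (2 * j + 1 + 1).doubleFactorial * (2 * j + 1).doubleFactorial :=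
      Nat.factorial_eq_mul_doubleFactorial (2 * j + 1)
    have h2 : 2 * n = 2 * j + 1 + 1 := by omega
    rw [h2, ha, hb]
    exact_mod_cast this
  -- b = 2^n * n!
  have hbval : b = 2 ^ n * (n.factorial : ℝ) := by
    have : (2 * n).doubleFactorial = 2 ^ n * n.factorial := Nat.doubleFactorial_two_mul n
    have h2 : 2 * n = 2 * j + 2 := by omega
    rw [h2] at this
    rw [hb]
    exact_mod_cast this
  -- key: π * n * a^2 ≤ b^2
  have key : Real.pi * n * a ^ 2 ≤ b ^ 2 := by
    have hW := Real.Wallis.le_W n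
    have hWeq := Real.Wallis.W_eq_factorial_ratio n
    rw [hWeq] at hW
    have hb4 : (2 : ℝ) ^ (4 * n) * (n.factorial : ℝ) ^ 4 = b ^ 4 := by
      rw [hbval, mul_pow, ← pow_mul, mul_comm 4 n]
    rw [hfact, hb4] at hW
    have h2n1 : (0 : ℝ) < 2 * n + 1 := by positivity
    have h2n2 : (0 : ℝ) < 2 * n + 2 := by positivity
    rw [div_mul_eq_mul_div, div_le_div_iff₀ h2n2 (by positivity)] at hW
    have h1 : Real.pi * (2 * (n:ℝ) + 1) ^ 2 * (a ^ 2 * b ^ 2) ≤ 2 * (2 * (n:ℝ) + 2) * b ^ 4 := by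
      nlinarith [hW]
    have h2 : Real.pi * (n:ℝ) * a ^ 2 * (2 * (2 * (n:ℝ) + 2) * b ^ 2) ≤
        Real.pi * (2 * (n:ℝ) + 1) ^ 2 * (a ^ 2 * b ^ 2) := by
      nlinarith [mul_nonneg (mul_nonneg Real.pi_pos.le (sq_nonneg a)) (sq_nonneg b)]
    have h3 : Real.pi * (n:ℝ) * a ^ 2 * (2 * (2 * (n:ℝ) + 2) * b ^ 2) ≤
        b ^ 2 * (2 * (2 * (n:ℝ) + 2) * b ^ 2) := by nlinarith [h1, h2]
    exact le_of_mul_le_mul_right h3 (by positivity)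
  have hsqrt : a * Real.sqrt (Real.pi * n) ≤ b := by
    have h1 : a * Real.sqrt (Real.pi * n) = Real.sqrt (Real.pi * n * a ^ 2) := by
      rw [Real.sqrt_mul (by positivity : (0:ℝ) ≤ Real.pi * n) (a ^ 2),
        Real.sqrt_sq hapos.le]; ring
    rw [h1, ← Real.sqrt_sq hbpos.le]
    exact Real.sqrt_le_sqrt key
  -- (2j+4).doubleFactorial = (2j+4) * b
  have hd : (Nat.doubleFactorial (2 * j + 4) : ℝ) = (2 * j + 4) * b := by
    have : (2 * j + 2 + 2).doubleFactorial = (2 * j + 2 + 2) * (2 * j + 2).doubleFactorial :=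
      Nat.doubleFactorial_add_two (2 * j + 2)
    have h2 : 2 * j + 4 = 2 * j + 2 + 2 := by omega
    rw [h2]
    push_cast [this]
    ring
  rw [hd]
  have hjn : ((j : ℝ) + 1) = (n : ℝ) := by push_cast [hn]; ring
  rw [hjn]
  have hs : 0 < Real.sqrt (Real.pi * n) := Real.sqrt_pos.mpr (by positivity)
  rw [div_le_div_iff₀ (by positivity) (by positivity)]
  have : 2 * ((j:ℝ) + 2) = 2 * (j:ℝ) + 4 := by ring
  nlinarith [mul_le_mul_of_nonneg_left hsqrt (by positivity : (0:ℝ) ≤ 2 * (j:ℝ) + 4), hs.le, hapos.le]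
end

section
/- Suppose a sequence of nonnegative reals (‖u^{(j)}‖) with ‖u^{(0)}‖ = 1 satisfies ‖u^{(j+1)}‖ ≤ M_n·∑_{s=0}^{j} ‖u^{(j−s)}‖·‖u^{(s)}‖ for all j ≥ 0, where M_n > 0 and r_n := 4M_n < 1. Then the series ∑_{j=0}^{∞} ‖u^{(j)}‖ converges, and for every m ≥ 0, ∑_{j=m+1}^{∞} ‖u^{(j)}‖ ≤ (r_n)^{m+1}/((1−r_n)·(m+2)·√(π(m+1))). -/
open Real

open Stirling in
lemma aux_sqrt_pi_le_stirling (n : ℕ) : Real.sqrt π ≤ stirlingSeq (n + 1) := by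
  have h : Filter.Tendsto (fun n => stirlingSeq (n + 1)) Filter.atTop (nhds (Real.sqrt π)) :=
    tendsto_stirlingSeq_sqrt_pi.comp (Filter.tendsto_add_atTop_nat 1)
  exact Antitone.le_of_tendsto stirlingSeq'_antitone h n

open Stirling in
lemma aux_factorial_eq (n : ℕ) :
    ((Nat.factorial (n + 1) : ℕ) : ℝ) = stirlingSeq (n + 1) * (Real.sqrt (2 * ((n:ℝ) + 1)) * (((n:ℝ) + 1) / Real.exp 1) ^ (n + 1)) := by
  rw [stirlingSeq]
  have h1 : Real.sqrt (2 * ((n:ℝ) + 1)) ≠ 0 := by positivity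
  have h2 : (((n:ℝ) + 1) / Real.exp 1) ^ (n + 1) ≠ 0 := by positivity
  push_cast
  field_simp

open Stirling in
lemma aux_centralBinom_le (n : ℕ) :
    ((n + 1).centralBinom : ℝ) ≤ 4 ^ (n + 1) / Real.sqrt (π * (n + 1)) := by
  set m : ℕ := n + 1 with hm
  have hspec : (m.centralBinom : ℝ) * ((Nat.factorial m : ℝ) * (Nat.factorial m : ℝ)) = ((Nat.factorial (2 * m) : ℕ) : ℝ) := by
    have := Nat.choose_mul_factorial_mul_factorial (n := 2 * m) (k := m) (by omega)
    rw [Nat.centralBinom_eq_two_mul_choose]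
    have h2 : 2 * m - m = m := by omega
    rw [h2] at this
    exact_mod_cast by rw [mul_assoc] at this; exact_mod_cast this
  set a : ℝ := stirlingSeq (2 * m) with ha
  set b : ℝ := stirlingSeq m with hb
  have hbpos : 0 < b := by rw [hb, hm]; exact stirlingSeq'_pos n
  have hapos : 0 < a := by
    have : 2 * m = (2 * n + 1) + 1 := by omega
    rw [ha, this]; exact stirlingSeq'_pos _
  have hπb : Real.sqrt π ≤ b := by rw [hb, hm]; exact aux_sqrt_pi_le_stirling n
  have hab : a ≤ b := by
    have h1 : 2 * m = (2 * n + 1) + 1 := by omega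
    have h2 : m = n + 1 := hm
    rw [ha, hb, h1, h2]
    exact stirlingSeq'_antitone (by omega : n ≤ 2 * n + 1)
  -- factorial formulas
  have hfm : ((Nat.factorial m : ℕ) : ℝ) = b * (Real.sqrt (2 * (m:ℝ)) * ((m : ℝ) / Real.exp 1) ^ m) := by
    rw [hb, hm]; exact_mod_cast aux_factorial_eq n
  have hf2m : ((Nat.factorial (2 * m) : ℕ) : ℝ) = a * (Real.sqrt (2 * ((2 * m : ℕ):ℝ)) * (((2 * m : ℕ):ℝ) / Real.exp 1) ^ (2 * m)) := by
    have h1 : 2 * m = (2 * n + 1) + 1 := by omega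
    rw [ha, h1]
    exact_mod_cast aux_factorial_eq (2 * n + 1)
  have hmpos : (0:ℝ) < (m : ℝ) := by positivity
  -- key algebraic identities
  have hcast : ((2 * m : ℕ) : ℝ) = 2 * (m : ℝ) := by push_cast; ring
  have hsq : Real.sqrt (2 * ((2 * m : ℕ) : ℝ)) = 2 * Real.sqrt m := by
    rw [hcast, show (2 : ℝ) * (2 * (m:ℝ)) = (2:ℝ)^2 * m by ring, Real.sqrt_mul (by positivity),
      Real.sqrt_sq (by norm_num)]
  have h4 : (4:ℝ) ^ m = (2 ^ m) ^ 2 := by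
    rw [← pow_mul, mul_comm m 2, pow_mul]; norm_num
  have hpow : (((2 * m : ℕ) : ℝ) / Real.exp 1) ^ (2 * m) = 4 ^ m * (((m : ℝ) / Real.exp 1) ^ m) ^ 2 := by
    rw [hcast, show (2:ℝ) * (m:ℝ) / Real.exp 1 = 2 * ((m:ℝ)/Real.exp 1) by ring, mul_pow,
      show 2 * m = m * 2 from mul_comm 2 m, pow_mul, pow_mul, h4]
  have hP : (0:ℝ) < ((m : ℝ) / Real.exp 1) ^ m := by positivity
  set P : ℝ := ((m : ℝ) / Real.exp 1) ^ m with hPdef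
  have hsm : (0:ℝ) < Real.sqrt m := Real.sqrt_pos.2 hmpos
  -- the central binomial as a ratio
  have hcb : (m.centralBinom : ℝ) = a * 4 ^ m / (b ^ 2 * Real.sqrt m) := by
    have hmfpos : (0:ℝ) < ((Nat.factorial m : ℕ) : ℝ) := by positivity
    rw [eq_div_iff (by positivity)]
    have key := hspec
    rw [hfm, hf2m, hsq, hpow] at key
    have hmm : Real.sqrt (m:ℝ) * Real.sqrt (m:ℝ) = (m:ℝ) := Real.mul_self_sqrt hmpos.le
    have e1 : b * (Real.sqrt (2*(m:ℝ)) * P) * (b * (Real.sqrt (2*(m:ℝ)) * P))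
        = b ^ 2 * (2 * (m:ℝ)) * P ^ 2 := by
      linear_combination b ^ 2 * P ^ 2 *
        Real.mul_self_sqrt (show (0:ℝ) ≤ 2 * (m:ℝ) by positivity)
    rw [e1] at key
    have h2 : (m.centralBinom : ℝ) * (b ^ 2 * Real.sqrt m) * (2 * Real.sqrt (m:ℝ) * P ^ 2)
        = a * 4 ^ m * (2 * Real.sqrt (m:ℝ) * P ^ 2) := by
      linear_combination key + 2 * (m.centralBinom : ℝ) * b ^ 2 * P ^ 2 * hmm
    exact mul_right_cancel₀ (by positivity) h2
  rw [hcb]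
  have hsπ : Real.sqrt (π * m) = Real.sqrt π * Real.sqrt m := Real.sqrt_mul pi_pos.le _
  have htarget : ((4:ℝ)) ^ m / Real.sqrt (π * (n+1 : ℝ)) = 4 ^ m / (Real.sqrt π * Real.sqrt m) := by
    rw [← hsπ]; norm_num [hm]
  rw [htarget]
  have hπpos : (0:ℝ) < Real.sqrt π := Real.sqrt_pos.2 pi_pos
  rw [div_le_div_iff₀ (by positivity) (by positivity)]
  have h1 : a * Real.sqrt π ≤ b ^ 2 := by nlinarith
  nlinarith [mul_le_mul_of_nonneg_right h1 (show (0:ℝ) ≤ 4 ^ m * Real.sqrt (m:ℝ) by positivity)]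

theorem stmt_12 (u : ℕ → ℝ) (hpos : ∀ j, 0 ≤ u j) (h0 : u 0 = 1)
    (M : ℝ) (hM : 0 < M)
    (hrec : ∀ j : ℕ, u (j + 1) ≤ M * ∑ s ∈ Finset.range (j + 1), u (j - s) * u s)
    (r : ℝ) (hr : r = 4 * M) (hr1 : r < 1) :
    Summable u ∧
      ∀ m : ℕ, (∑' j : ℕ, u (m + 1 + j)) ≤
        r ^ (m + 1) / ((1 - r) * ((m : ℝ) + 2) * Real.sqrt (π * ((m : ℝ) + 1))) := by
  have hr0 : 0 < r := by rw [hr]; positivity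
  -- Step 1: u j ≤ M^j * catalan j
  have key : ∀ j, u j ≤ M ^ j * (catalan j : ℝ) := by
    intro j
    induction j using Nat.strong_induction_on with
    | _ j ih =>
      match j with
      | 0 => simp [h0]
      | Nat.succ j =>
        calc u (j+1) ≤ M * ∑ s ∈ Finset.range (j + 1), u (j - s) * u s := hrec j
          _ ≤ M * ∑ s ∈ Finset.range (j + 1),
                (M ^ (j - s) * (catalan (j - s) : ℝ)) * (M ^ s * (catalan s : ℝ)) := by
              apply mul_le_mul_of_nonneg_left _ hM.le
              apply Finset.sum_le_sum
              intro s hs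
              exact mul_le_mul (ih (j - s) (by omega)) (ih s (by
                  simp only [Finset.mem_range] at hs; omega)) (hpos s) (by positivity)
          _ = M ^ (j + 1) * ∑ s ∈ Finset.range (j + 1),
                ((catalan s : ℝ) * (catalan (j - s) : ℝ)) := by
              rw [Finset.mul_sum, Finset.mul_sum]
              apply Finset.sum_congr rfl
              intro s hs
              simp only [Finset.mem_range] at hs
              have hM' : M ^ (j - s) * M ^ s = M ^ j := by
                rw [← pow_add]; congr 1; omega
              calc M * (M ^ (j-s) * (catalan (j-s) : ℝ) * (M ^ s * (catalan s : ℝ)))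
                  = M * (M ^ (j-s) * M ^ s) * ((catalan (j-s) : ℝ) * (catalan s : ℝ)) := by ring
                _ = M ^ (j+1) * ((catalan s : ℝ) * (catalan (j-s) : ℝ)) := by
                    rw [hM', pow_succ]; ring
          _ = M ^ (j + 1) * (catalan (j + 1) : ℝ) := by
              congr 1
              rw [catalan_succ]
              push_cast
              rw [Finset.sum_range fun i => (catalan i : ℝ) * (catalan (j - i) : ℝ)]
  -- Step 2: refined bound
  have hbound : ∀ j : ℕ, u (j + 1) ≤ r ^ (j + 1) / (((j : ℝ) + 2) * Real.sqrt (π * ((j : ℝ) + 1))) := by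
    intro j
    have hc : ((j : ℝ) + 2) * (catalan (j+1) : ℝ) = ((j+1).centralBinom : ℝ) := by
      exact_mod_cast congrArg (Nat.cast : ℕ → ℝ) (succ_mul_catalan_eq_centralBinom (j+1))
    have hcb := aux_centralBinom_le j
    have hsqpos : (0:ℝ) < Real.sqrt (π * ((j:ℝ) + 1)) := Real.sqrt_pos.2 (by positivity)
    have hcat : (catalan (j+1) : ℝ) ≤ 4 ^ (j+1) / (((j:ℝ)+2) * Real.sqrt (π * ((j:ℝ)+1))) := by
      rw [le_div_iff₀ (by positivity)]
      calc (catalan (j+1) : ℝ) * (((j:ℝ)+2) * Real.sqrt (π * ((j:ℝ)+1)))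
          = (((j : ℝ) + 2) * (catalan (j+1) : ℝ)) * Real.sqrt (π * ((j:ℝ)+1)) := by ring
        _ = ((j+1).centralBinom : ℝ) * Real.sqrt (π * ((j:ℝ)+1)) := by rw [hc]
        _ ≤ (4 ^ (j+1) / Real.sqrt (π * ((j:ℝ)+1))) * Real.sqrt (π * ((j:ℝ)+1)) := by
            apply mul_le_mul_of_nonneg_right _ hsqpos.le
            exact_mod_cast hcb
        _ = 4 ^ (j+1) := by field_simp
    calc u (j+1) ≤ M ^ (j+1) * (catalan (j+1) : ℝ) := key (j+1)
      _ ≤ M ^ (j+1) * (4 ^ (j+1) / (((j:ℝ)+2) * Real.sqrt (π * ((j:ℝ)+1)))) :=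
          mul_le_mul_of_nonneg_left hcat (by positivity)
      _ = r ^ (j + 1) / (((j : ℝ) + 2) * Real.sqrt (π * ((j : ℝ) + 1))) := by
          rw [hr, mul_pow]; ring
  -- simple geometric bound
  have hgeo : ∀ j : ℕ, u (j + 1) ≤ r ^ (j + 1) := by
    intro j
    refine (hbound j).trans ?_
    have hsq1 : (1:ℝ) ≤ Real.sqrt (π * ((j:ℝ) + 1)) := by
      have h1 : (1:ℝ) ≤ π * ((j:ℝ) + 1) := by nlinarith [pi_gt_three, Nat.cast_nonneg (α := ℝ) j]
      calc (1:ℝ) = Real.sqrt 1 := Real.sqrt_one.symm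
        _ ≤ Real.sqrt (π * ((j:ℝ) + 1)) := Real.sqrt_le_sqrt h1
    have hD : (1:ℝ) ≤ ((j:ℝ)+2) * Real.sqrt (π * ((j:ℝ)+1)) := by nlinarith
    calc r ^ (j+1) / (((j:ℝ)+2) * Real.sqrt (π * ((j:ℝ)+1))) ≤ r ^ (j+1) / 1 := by
          apply div_le_div_of_nonneg_left (by positivity) (by norm_num) hD
      _ = r ^ (j+1) := by norm_num
  have hu : Summable u := by
    rw [← summable_nat_add_iff 1]
    apply Summable.of_nonneg_of_le (fun j => hpos (j+1)) (fun j => hgeo j)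
    exact (summable_geometric_of_lt_one hr0.le hr1).mul_right r |>.congr
      (fun j => by rw [← pow_succ])
  refine ⟨hu, fun m => ?_⟩
  have hs1 : Summable (fun k => u (m + 1 + k)) := by
    have := (summable_nat_add_iff (m+1)).2 hu
    exact this.congr (fun k => by rw [add_comm])
  set C : ℝ := ((m:ℝ)+2) * Real.sqrt (π * ((m:ℝ)+1)) with hC
  have hsqpos : (0:ℝ) < Real.sqrt (π * ((m:ℝ) + 1)) := Real.sqrt_pos.2 (by positivity)
  have hCpos : 0 < C := by positivity
  have hterm : ∀ k : ℕ, u (m + 1 + k) ≤ r ^ (m + 1) * r ^ k / C := by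
    intro k
    have h1 := hbound (m + k)
    have h2 : u (m + 1 + k) = u ((m + k) + 1) := by congr 1; omega
    rw [h2]
    refine h1.trans ?_
    have hnum : r ^ (m + k + 1) = r ^ (m + 1) * r ^ k := by rw [← pow_add]; congr 1; omega
    rw [hnum]
    apply div_le_div_of_nonneg_left (by positivity) hCpos
    rw [hC]
    have hsq : Real.sqrt (π * ((m:ℝ)+1)) ≤ Real.sqrt (π * (((m:ℕ)+(k:ℕ):ℕ):ℝ)+π*1) := by
      apply Real.sqrt_le_sqrt
      push_cast
      nlinarith [pi_pos, Nat.cast_nonneg (α := ℝ) k]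
    have h3 : Real.sqrt (π * ((m:ℝ)+1)) ≤ Real.sqrt (π * ((((m+k):ℕ):ℝ)+1)) := by
      refine hsq.trans_eq ?_
      congr 1; push_cast; ring
    have h4 : ((m:ℝ)+2) ≤ ((((m+k):ℕ):ℝ)+2) := by push_cast; nlinarith [Nat.cast_nonneg (α := ℝ) k]
    exact mul_le_mul h4 h3 hsqpos.le (by positivity)
  have hs2 : Summable (fun k : ℕ => r ^ (m + 1) * r ^ k / C) := by
    apply Summable.div_const
    exact (summable_geometric_of_lt_one hr0.le hr1).mul_left _
  calc (∑' k : ℕ, u (m + 1 + k)) ≤ ∑' k : ℕ, r ^ (m + 1) * r ^ k / C :=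
        Summable.tsum_le_tsum hterm hs1 hs2
    _ = (r ^ (m + 1) / C) * ∑' k : ℕ, r ^ k := by
        rw [← tsum_mul_left]
        apply tsum_congr; intro k; ring
    _ = (r ^ (m + 1) / C) * (1 - r)⁻¹ := by rw [tsum_geometric_of_lt_one hr0.le hr1]
    _ = r ^ (m + 1) / ((1 - r) * ((m : ℝ) + 2) * Real.sqrt (π * ((m : ℝ) + 1))) := by
        rw [hC]
        field_simp
end

section
/- With u^{(1)} as in the previous context (the first FD-method eigenfunction correction for q_0(x)=x on [0,1]), u^{(1)} satisfies the differential equation (u^{(1)})''''(x) − (nπ)⁴·u^{(1)}(x) = (λ^{(1)} − x)·√2·sin(nπx) for all x ∈ (0,1), where λ^{(1)} = 1/2. -/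
open Real

noncomputable def Ffam (k a b c d e h f g : ℝ) : ℝ → ℝ := fun x =>
  a * Real.cos (k*x) + b * x * Real.cos (k*x) + c * x^2 * Real.cos (k*x) +
  d * Real.sin (k*x) + e * x * Real.sin (k*x) + h * x^2 * Real.sin (k*x) +
  f * Real.cosh (k*x) + g * Real.sinh (k*x)

lemma Ffam_hasDerivAt (k a b c d e h f g x : ℝ) :
    HasDerivAt (Ffam k a b c d e h f g)
      (Ffam k (b+d*k) (2*c+e*k) (h*k) (e-a*k) (2*h-b*k) (-(c*k)) (g*k) (f*k) x) x := by
  have hk : HasDerivAt (fun x : ℝ => k*x) k x := by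
    simpa using (hasDerivAt_id x).const_mul k
  have hc := hk.cos
  have hs := hk.sin
  have hch := hk.cosh
  have hsh := hk.sinh
  have hx : HasDerivAt (fun x : ℝ => x) 1 x := hasDerivAt_id x
  have hx2 : HasDerivAt (fun x : ℝ => x^2) (2*x) x := by
    simpa using hasDerivAt_pow 2 x
  have H2 : HasDerivAt (Ffam k a b c d e h f g)
      (a * (-Real.sin (k*x) * k) + ((b*1) * Real.cos (k*x) + (b*x) * (-Real.sin (k*x) * k)) +
       ((c*(2*x)) * Real.cos (k*x) + (c*x^2) * (-Real.sin (k*x) * k)) +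
       d * (Real.cos (k*x) * k) + ((e*1) * Real.sin (k*x) + (e*x) * (Real.cos (k*x) * k)) +
       ((h*(2*x)) * Real.sin (k*x) + (h*x^2) * (Real.cos (k*x) * k)) +
       f * (Real.sinh (k*x) * k) + g * (Real.cosh (k*x) * k)) x := by
    exact (((((((hc.const_mul a).add ((hx.const_mul b).mul hc)).add
      ((hx2.const_mul c).mul hc)).add (hs.const_mul d)).add
      ((hx.const_mul e).mul hs)).add ((hx2.const_mul h).mul hs)).add
      (hch.const_mul f)).add (hsh.const_mul g)
  convert H2 using 1
  simp only [Ffam]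
  ring

lemma Ffam_deriv (k a b c d e h f g : ℝ) :
    deriv (Ffam k a b c d e h f g)
      = Ffam k (b+d*k) (2*c+e*k) (h*k) (e-a*k) (2*h-b*k) (-(c*k)) (g*k) (f*k) :=
  funext fun x => (Ffam_hasDerivAt k a b c d e h f g x).deriv

theorem stmt_17 (n : ℕ) (hn : 1 ≤ n)
    (u : ℝ → ℝ)
    (hu : u = fun x =>
      (Real.sqrt 2 / (4 * ((n : ℝ) * π) ^ 5)) * Real.cos ((n : ℝ) * π * x) +
      (Real.sqrt 2 / (8 * ((n : ℝ) * π) ^ 3)) * x * Real.cos ((n : ℝ) * π * x) +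
      (-(Real.sqrt 2) / (8 * ((n : ℝ) * π) ^ 3)) * x ^ 2 * Real.cos ((n : ℝ) * π * x) +
      (-(3 * Real.sqrt 2) / (16 * ((n : ℝ) * π) ^ 4)) * Real.sin ((n : ℝ) * π * x) +
      (3 * Real.sqrt 2 / (8 * ((n : ℝ) * π) ^ 4)) * x * Real.sin ((n : ℝ) * π * x) +
      (-(Real.sqrt 2) / (4 * ((n : ℝ) * π) ^ 5)) * Real.cosh ((n : ℝ) * π * x) +
      (-(Real.sqrt 2) * (Real.cos ((n : ℝ) * π) - Real.cosh ((n : ℝ) * π)) /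
          (4 * ((n : ℝ) * π) ^ 5 * Real.sinh ((n : ℝ) * π))) * Real.sinh ((n : ℝ) * π * x))
    :
    ∀ x ∈ Set.Ioo (0 : ℝ) 1,
      iteratedDeriv 4 u x - ((n : ℝ) * π) ^ 4 * u x =
        (1 / 2 - x) * Real.sqrt 2 * Real.sin ((n : ℝ) * π * x) := by
  intro x hx
  set k : ℝ := (n : ℝ) * π with hk
  have hkpos : 0 < k := by
    have : (1 : ℝ) ≤ (n : ℝ) := by exact_mod_cast hn
    positivity
  have hkne : k ≠ 0 := ne_of_gt hkpos
  have hsh : Real.sinh k ≠ 0 := ne_of_gt (Real.sinh_pos_iff.mpr hkpos)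
  set s : ℝ := Real.sqrt 2 with hs
  have huF : u = Ffam k (s/(4*k^5)) (s/(8*k^3)) (-s/(8*k^3)) (-(3*s)/(16*k^4))
      (3*s/(8*k^4)) 0 (-s/(4*k^5)) (-s*(Real.cos k - Real.cosh k)/(4*k^5*Real.sinh k)) := by
    rw [hu]; funext y; simp only [Ffam]; ring
  rw [huF, iteratedDeriv_eq_iterate]
  show deriv (deriv (deriv (deriv _))) x - _ = _
  rw [Ffam_deriv, Ffam_deriv, Ffam_deriv, Ffam_deriv]
  simp only [Ffam]
  field_simp
  ring
end

section
/- With u^{(1)} as in the previous context, the orthogonality condition ∫_0^1 u^{(1)}(x)·√2·sin(nπx) dx = 0 holds. -/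
open Real

lemma hd_sin (k x : ℝ) : HasDerivAt (fun y => Real.sin (k*y)) (k * Real.cos (k*x)) x := by
  simpa [mul_comm, Function.comp_def] using (Real.hasDerivAt_sin (k*x)).comp x ((hasDerivAt_id x).const_mul k)

lemma hd_cos (k x : ℝ) : HasDerivAt (fun y => Real.cos (k*y)) (-(k * Real.sin (k*x))) x := by
  simpa [mul_comm, Function.comp_def] using (Real.hasDerivAt_cos (k*x)).comp x ((hasDerivAt_id x).const_mul k)

lemma hd_sinh (k x : ℝ) : HasDerivAt (fun y => Real.sinh (k*y)) (k * Real.cosh (k*x)) x := by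
  simpa [mul_comm, Function.comp_def] using (Real.hasDerivAt_sinh (k*x)).comp x ((hasDerivAt_id x).const_mul k)

lemma hd_cosh (k x : ℝ) : HasDerivAt (fun y => Real.cosh (k*y)) (k * Real.sinh (k*x)) x := by
  simpa [mul_comm, Function.comp_def] using (Real.hasDerivAt_cosh (k*x)).comp x ((hasDerivAt_id x).const_mul k)

noncomputable def vv (k c7 : ℝ) : ℝ → ℝ := fun y =>
  (1/(4*k^5)) * Real.cos (k*y) + (1/(8*k^3)) * y * Real.cos (k*y)
  + (-(1/(8*k^3))) * y^2 * Real.cos (k*y) + (-(3/(16*k^4))) * Real.sin (k*y)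
  + (3/(8*k^4)) * y * Real.sin (k*y) + (-(1/(4*k^5))) * Real.cosh (k*y)
  + c7 * Real.sinh (k*y)

noncomputable def FF (k c7 : ℝ) : ℝ → ℝ := fun y =>
  (1/(4*k^5)) * (Real.sin (k*y) * Real.sin (k*y) / (2*k))
  + (1/(8*k^3)) * (-(y/(4*k)) + y * (Real.sin (k*y) * Real.sin (k*y)) / (2*k)
      + Real.sin (k*y) * Real.cos (k*y) / (4*k^2))
  + (-(1/(8*k^3))) * (-(y^2/(4*k)) + y^2 * (Real.sin (k*y) * Real.sin (k*y)) / (2*k)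
      + y * (Real.sin (k*y) * Real.cos (k*y)) / (2*k^2)
      - Real.sin (k*y) * Real.sin (k*y) / (4*k^3))
  + (-(3/(16*k^4))) * (y/2 - Real.sin (k*y) * Real.cos (k*y) / (2*k))
  + (3/(8*k^4)) * (y^2/4 - y * (Real.sin (k*y) * Real.cos (k*y)) / (2*k)
      + Real.sin (k*y) * Real.sin (k*y) / (4*k^2))
  + (-(1/(4*k^5))) * ((Real.sinh (k*y) * Real.sin (k*y) - Real.cosh (k*y) * Real.cos (k*y)) / (2*k))
  + c7 * ((Real.cosh (k*y) * Real.sin (k*y) - Real.sinh (k*y) * Real.cos (k*y)) / (2*k))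

set_option maxHeartbeats 2000000 in
lemma FF_deriv (k c7 x : ℝ) (hk : k ≠ 0) :
    HasDerivAt (FF k c7) (vv k c7 x * Real.sin (k*x)) x := by
  have Hs := hd_sin k x
  have Hc := hd_cos k x
  have HS := hd_sinh k x
  have HC := hd_cosh k x
  have Hid := hasDerivAt_id x
  have Hp2 := hasDerivAt_pow 2 x
  have term1 := ((Hs.mul Hs).div_const (2*k)).const_mul (1/(4*k^5))
  have term2 := ((((Hid.div_const (4*k)).neg).add ((Hid.mul (Hs.mul Hs)).div_const (2*k))).add
      ((Hs.mul Hc).div_const (4*k^2))).const_mul (1/(8*k^3))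
  have term3 := (((((Hp2.div_const (4*k)).neg).add ((Hp2.mul (Hs.mul Hs)).div_const (2*k))).add
      ((Hid.mul (Hs.mul Hc)).div_const (2*k^2))).sub
      ((Hs.mul Hs).div_const (4*k^3))).const_mul (-(1/(8*k^3)))
  have term4 := (((Hid.div_const 2).sub ((Hs.mul Hc).div_const (2*k)))).const_mul (-(3/(16*k^4)))
  have term5 := ((((Hp2.div_const 4).sub ((Hid.mul (Hs.mul Hc)).div_const (2*k))).add
      ((Hs.mul Hs).div_const (4*k^2)))).const_mul (3/(8*k^4))
  have term6 := (((HS.mul Hs).sub (HC.mul Hc)).div_const (2*k)).const_mul (-(1/(4*k^5)))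
  have term7 := (((HC.mul Hs).sub (HS.mul Hc)).div_const (2*k)).const_mul c7
  have H := (((((term1.add term2).add term3).add term4).add term5).add term6).add term7
  have hpy : Real.sin (k*x)^2 + Real.cos (k*x)^2 = 1 := Real.sin_sq_add_cos_sq _
  have hcc : Real.cos (k*x) ^ 2 = 1 - Real.sin (k*x) ^ 2 := by nlinarith [hpy]
  unfold FF vv
  convert H using 1
  · rfl
  · rfl
  · rfl
  simp only [Pi.mul_apply, id]
  ring_nf
  rw [hcc]
  field_simp
  ring

lemma vv_sin_cont (k c7 : ℝ) : Continuous (fun x => vv k c7 x * Real.sin (k*x)) := by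
  unfold vv; fun_prop

theorem stmt_18 (n : ℕ) (hn : 1 ≤ n)
    (u : ℝ → ℝ)
    (hu : u = fun x =>
      (Real.sqrt 2 / (4 * ((n : ℝ) * π) ^ 5)) * Real.cos ((n : ℝ) * π * x) +
      (Real.sqrt 2 / (8 * ((n : ℝ) * π) ^ 3)) * x * Real.cos ((n : ℝ) * π * x) +
      (-(Real.sqrt 2) / (8 * ((n : ℝ) * π) ^ 3)) * x ^ 2 * Real.cos ((n : ℝ) * π * x) +
      (-(3 * Real.sqrt 2) / (16 * ((n : ℝ) * π) ^ 4)) * Real.sin ((n : ℝ) * π * x) +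
      (3 * Real.sqrt 2 / (8 * ((n : ℝ) * π) ^ 4)) * x * Real.sin ((n : ℝ) * π * x) +
      (-(Real.sqrt 2) / (4 * ((n : ℝ) * π) ^ 5)) * Real.cosh ((n : ℝ) * π * x) +
      (-(Real.sqrt 2) * (Real.cos ((n : ℝ) * π) - Real.cosh ((n : ℝ) * π)) /
          (4 * ((n : ℝ) * π) ^ 5 * Real.sinh ((n : ℝ) * π))) * Real.sinh ((n : ℝ) * π * x))
    :
    (∫ x in (0 : ℝ)..1, u x * Real.sqrt 2 * Real.sin ((n : ℝ) * π * x)) = 0 := by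
  have hn1 : (1:ℝ) ≤ (n:ℝ) := by exact_mod_cast hn
  set k := (n:ℝ) * π with hk
  have hkpos : 0 < k := mul_pos (by linarith) Real.pi_pos
  have hk0 : k ≠ 0 := ne_of_gt hkpos
  have hsinh : Real.sinh k ≠ 0 := ne_of_gt (Real.sinh_pos_iff.mpr hkpos)
  have hsin : Real.sin k = 0 := by rw [hk]; exact Real.sin_nat_mul_pi n
  have hcos2 : Real.cos k ^ 2 = 1 := by
    have h := Real.sin_sq_add_cos_sq k; nlinarith [hsin]
  set c7 := -(Real.cos k - Real.cosh k) / (4 * k ^ 5 * Real.sinh k) with hc7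
  have h2 : Real.sqrt 2 * Real.sqrt 2 = 2 := Real.mul_self_sqrt (by norm_num)
  have huv : u = fun x => Real.sqrt 2 * vv k c7 x := by
    rw [hu]; funext x; rw [hc7]; simp only [vv]; ring
  have key : (fun x => u x * Real.sqrt 2 * Real.sin (k*x))
      = fun x => 2 * (vv k c7 x * Real.sin (k*x)) := by
    funext x
    rw [huv]
    linear_combination (vv k c7 x * Real.sin (k*x)) * h2
  rw [key, intervalIntegral.integral_const_mul]
  have hint : (∫ x in (0:ℝ)..1, vv k c7 x * Real.sin (k*x)) = FF k c7 1 - FF k c7 0 :=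
    intervalIntegral.integral_eq_sub_of_hasDerivAt
      (fun x _ => FF_deriv k c7 x hk0)
      ((vv_sin_cont k c7).intervalIntegrable 0 1)
  rw [hint]
  have hval : FF k c7 1 - FF k c7 0 = 0 := by
    simp only [FF, mul_one, mul_zero, Real.sin_zero, Real.cos_zero, Real.sinh_zero,
      Real.cosh_zero, hsin]
    rw [hc7]
    field_simp
    ring_nf
    rw [hcos2]
    ring
  rw [hval]
  ring
end
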